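/- arXiv:1504.05353 — 11 statements merged into one kernel-verified Lean document; each statement's English description precedes it below -/
import Mathlib

section
/- Let Π be a uniformly random bijection from R to R' with |R| = |R'| = n, τ' : R' → V' a table, σ : R → V' a fixed function, r ∈ R, r' ∈ R'. Then P[Π(r) = r' ∧ σ = τ' ∘ Π] equals (∏_{v' ∈ image(τ')} (#_{τ'}(v'))!) / (#_{τ'}(τ'(r')) · n!) if there is a bijection π̂ with σ = τ' ∘ π̂ and σ(r) = τ'(r'), and 0 otherwise. -/
open Finset Equiv

lemma stmt4_aux_stab {R' V' : Type*} [Fintype R'] [DecidableEq R'] [DecidableEq V']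
    (τ' : R' → V') :
    (Finset.univ.filter (fun g : R' ≃ R' => τ' ∘ g = τ')).card
      = ∏ v' ∈ Finset.univ.image τ',
          Nat.factorial (Finset.univ.filter (fun s' : R' => τ' s' = v')).card := by
  classical
  have h := DomMulAct.stabilizer_card' τ'
  rw [Fintype.card_subtype] at h
  rw [h]
  refine Finset.prod_congr rfl fun v' _ => ?_
  rw [Fintype.card_subtype]

lemma stmt4_count {R R' V' : Type*} [Fintype R] [Fintype R'] [DecidableEq R] [DecidableEq R']
    [DecidableEq V'] (τ' : R' → V') (σ : R → V') (r : R) (r' : R')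
    (πh : R ≃ R') (hπh : σ = τ' ∘ πh) (hr : σ r = τ' r') :
    (Finset.univ.filter (fun s' : R' => τ' s' = τ' r')).card
      * (Finset.univ.filter (fun π : R ≃ R' => π r = r' ∧ σ = τ' ∘ π)).card
    = ∏ v' ∈ Finset.univ.image τ',
          Nat.factorial (Finset.univ.filter (fun s' : R' => τ' s' = v')).card := by
  classical
  -- Step A: card of {π | σ = τ'∘π} = card of stabilizer
  have hA : (Finset.univ.filter (fun π : R ≃ R' => σ = τ' ∘ π)).card
      = (Finset.univ.filter (fun g : R' ≃ R' => τ' ∘ g = τ')).card := by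
    apply Finset.card_bij' (fun π _ => πh.symm.trans π) (fun g _ => πh.trans g)
    · intro π hπ
      simp only [Finset.mem_filter, Finset.mem_univ, true_and] at hπ ⊢
      funext x
      simp only [Function.comp_apply, Equiv.trans_apply]
      rw [← Function.comp_apply (f := τ') (g := π), ← hπ, hπh]
      simp
    · intro g hg
      simp only [Finset.mem_filter, Finset.mem_univ, true_and] at hg ⊢
      funext x
      rw [hπh]
      simp only [Function.comp_apply, Equiv.trans_apply]
      rw [← Function.comp_apply (f := τ') (g := g), hg]
    · intro π _; ext x; simp
    · intro g _; ext x; simp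
  -- Step C pieces: for s' in the fiber, the slices have equal card
  have hslice : ∀ s' ∈ Finset.univ.filter (fun s' : R' => τ' s' = τ' r'),
      (Finset.univ.filter (fun π : R ≃ R' => π r = s' ∧ σ = τ' ∘ π)).card
        = (Finset.univ.filter (fun π : R ≃ R' => π r = r' ∧ σ = τ' ∘ π)).card := by
    intro s' hs'
    simp only [Finset.mem_filter, Finset.mem_univ, true_and] at hs'
    have hswap : τ' ∘ (Equiv.swap s' r' : R' ≃ R') = τ' := by
      funext x
      simp only [Function.comp_apply]
      rcases eq_or_ne x s' with rfl | h1
      · rw [Equiv.swap_apply_left, hs']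
      rcases eq_or_ne x r' with rfl | h2
      · rw [Equiv.swap_apply_right, hs']
      · rw [Equiv.swap_apply_of_ne_of_ne h1 h2]
    refine Finset.card_bij' (fun π _ => π.trans (Equiv.swap s' r'))
      (fun π _ => π.trans (Equiv.swap s' r')) ?_ ?_ ?_ ?_
    · intro π hπ
      simp only [Finset.mem_filter, Finset.mem_univ, true_and] at hπ ⊢
      obtain ⟨h1, h2⟩ := hπ
      constructor
      · simp [Equiv.trans_apply, h1]
      · funext x
        simp only [Function.comp_apply, Equiv.trans_apply]
        rw [← Function.comp_apply (f := τ') (g := Equiv.swap s' r'), hswap,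
          ← Function.comp_apply (f := τ') (g := π), ← h2]
    · intro π hπ
      simp only [Finset.mem_filter, Finset.mem_univ, true_and] at hπ ⊢
      obtain ⟨h1, h2⟩ := hπ
      constructor
      · simp [Equiv.trans_apply, h1]
      · funext x
        simp only [Function.comp_apply, Equiv.trans_apply]
        rw [← Function.comp_apply (f := τ') (g := Equiv.swap s' r'), hswap,
          ← Function.comp_apply (f := τ') (g := π), ← h2]
    · intro π _; ext x; simp [Equiv.swap_apply_self]
    · intro π _; ext x; simp [Equiv.swap_apply_self]
  -- Step C: partition
  have hpart : (Finset.univ.filter (fun π : R ≃ R' => σ = τ' ∘ π))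
      = (Finset.univ.filter (fun s' : R' => τ' s' = τ' r')).biUnion
          (fun s' => Finset.univ.filter (fun π : R ≃ R' => π r = s' ∧ σ = τ' ∘ π)) := by
    ext π
    simp only [Finset.mem_filter, Finset.mem_univ, true_and, Finset.mem_biUnion]
    constructor
    · intro h
      exact ⟨π r, by rw [← Function.comp_apply (f := τ') (g := π), ← h, hr], rfl, h⟩
    · rintro ⟨s', _, _, h⟩; exact h
  have hdisj : ((Finset.univ.filter (fun s' : R' => τ' s' = τ' r') : Finset R') : Set R').PairwiseDisjoint
      (fun s' => Finset.univ.filter (fun π : R ≃ R' => π r = s' ∧ σ = τ' ∘ π)) := by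
    intro a _ b _ hab
    simp only [Function.onFun, Finset.disjoint_left, Finset.mem_filter]
    rintro π ⟨_, h1, _⟩ ⟨_, h2, _⟩
    exact hab (h1 ▸ h2 ▸ rfl)
  have := Finset.card_biUnion hdisj
  rw [← hpart] at this
  rw [hA, stmt4_aux_stab] at this
  rw [this, Finset.sum_congr rfl hslice, Finset.sum_const, smul_eq_mul]

/-- For a uniformly random bijection `Π : R → R'` (|R| = |R'| = n),
`P[Π(r) = r' ∧ σ = τ' ∘ Π] = (∏_{v'} #_{τ'}(v')!) / (#_{τ'}(τ'(r')) · n!)` if some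
bijection `πh` with `σ = τ' ∘ πh` and `σ(r) = τ'(r')` exists, and `0` otherwise. -/
theorem stmt4 {R R' V' : Type*} [Fintype R] [Fintype R'] [Fintype V']
    [DecidableEq R] [DecidableEq R'] [DecidableEq V']
    (hcard : Fintype.card R = Fintype.card R')
    (τ' : R' → V') (σ : R → V') (r : R) (r' : R') :
    (((Finset.univ.filter (fun π : R ≃ R' => π r = r' ∧ σ = τ' ∘ π)).card : ℝ)
        / (Nat.factorial (Fintype.card R)) =
      if ∃ πh : R ≃ R', σ = τ' ∘ πh ∧ σ r = τ' r' then
        (∏ v' ∈ Finset.univ.image τ',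
          ((Nat.factorial (Finset.univ.filter (fun s' : R' => τ' s' = v')).card : ℝ)))
          / (((Finset.univ.filter (fun s' : R' => τ' s' = τ' r')).card : ℝ)
              * (Nat.factorial (Fintype.card R)))
      else 0) := by
  classical
  split_ifs with h
  · obtain ⟨πh, hπh, hr⟩ := h
    have key := stmt4_count τ' σ r r' πh hπh hr
    have hmem : r' ∈ Finset.univ.filter (fun s' : R' => τ' s' = τ' r') := by
      simp
    have hm0 : (0 : ℝ) < (Finset.univ.filter (fun s' : R' => τ' s' = τ' r')).card := by
      exact_mod_cast Finset.card_pos.mpr ⟨r', hmem⟩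
    have hf0 : (0 : ℝ) < (Nat.factorial (Fintype.card R) : ℝ) := by
      exact_mod_cast Nat.factorial_pos _
    have keyR : ((Finset.univ.filter (fun s' : R' => τ' s' = τ' r')).card : ℝ)
        * ((Finset.univ.filter (fun π : R ≃ R' => π r = r' ∧ σ = τ' ∘ π)).card : ℝ)
        = ∏ v' ∈ Finset.univ.image τ',
            ((Nat.factorial (Finset.univ.filter (fun s' : R' => τ' s' = v')).card : ℝ)) := by
      exact_mod_cast key
    field_simp
    rw [← keyR]; ring
  · push_neg at h
    have : (Finset.univ.filter (fun π : R ≃ R' => π r = r' ∧ σ = τ' ∘ π)) = ∅ := by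
      ext π
      simp only [Finset.mem_filter, Finset.mem_univ, true_and, Finset.notMem_empty,
        iff_false, not_and]
      rintro hπr hσ
      exact absurd (by rw [hσ, Function.comp_apply, hπr]) (fun hh => (h π hσ) hh)
    rw [this]
    simp
end

section
/- Let Δ be a deterministic anonymization (for each private table τ there is a unique released table Δ(τ)), with |R| = |R'|. If the released table τ' is not k-anonymous (some record r' has fewer than k records sharing its value), then (Δ, τ') is not P k-anonymous: there exists a distribution on private tables (namely a point mass on some τ with Δ(τ) = τ' ∘ π for some bijection π) and records r ∈ R, r' ∈ R' such that P[Π(r) = r' | T' = τ'] = 1/#_{τ'}(τ'(r')) > 1/k. -/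
/-- Lemma 2: if `Δ` is deterministic, `τ'` is reachable, and `τ'` is
not k-anonymous, then `(Δ, τ')` is not Pk-anonymous: there is a point-mass private
table `τ` and records `r, r'` with conditional probability
`P[Π(r) = r' | T' = τ'] = 1/#_{τ'}(τ'(r')) > 1/k`. -/
theorem stmt5 {R R' V V' : Type*} [Fintype R] [Fintype R'] [Fintype V'] [Fintype V]
    [DecidableEq R] [DecidableEq R'] [DecidableEq V'] [DecidableEq V]
    (hcard : Fintype.card R = Fintype.card R')
    (Δ : (R → V) → (R → V')) (τ' : R' → V') (k : ℕ) (hk : 0 < k)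
    (hreach : ∃ (τ : R → V) (π : R ≃ R'), Δ τ = τ' ∘ π)
    (hnotk : ∃ r'0 : R',
      (Finset.univ.filter (fun s' : R' => τ' s' = τ' r'0)).card < k) :
    ∃ (τ : R → V) (r : R) (r' : R'),
      0 < (Finset.univ.filter (fun π : R ≃ R' => Δ τ = τ' ∘ π)).card ∧
      ((Finset.univ.filter (fun π : R ≃ R' => π r = r' ∧ Δ τ = τ' ∘ π)).card : ℝ) /
          ((Finset.univ.filter (fun π : R ≃ R' => Δ τ = τ' ∘ π)).card : ℝ)
        = 1 / ((Finset.univ.filter (fun s' : R' => τ' s' = τ' r')).card : ℝ) ∧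
      (1 : ℝ) / (k : ℝ)
        < 1 / ((Finset.univ.filter (fun s' : R' => τ' s' = τ' r')).card : ℝ) := by
  obtain ⟨τ, π, hτ⟩ := hreach
  obtain ⟨r'0, hr'0⟩ := hnotk
  set r : R := π.symm r'0 with hr
  refine ⟨τ, r, r'0, ?_, ?_, ?_⟩
  case _ =>
    refine Finset.card_pos.mpr ⟨π, ?_⟩
    simp [hτ]
  case _ =>
    set F : Finset R' := Finset.univ.filter (fun s' : R' => τ' s' = τ' r'0) with hF
    set A : Finset (R ≃ R') := Finset.univ.filter (fun σ : R ≃ R' => Δ τ = τ' ∘ σ) with hA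
    set B : Finset (R ≃ R') :=
      Finset.univ.filter (fun σ : R ≃ R' => σ r = r'0 ∧ Δ τ = τ' ∘ σ) with hB
    have hπB : π ∈ B := by simp [hB, hτ, hr]
    have hBpos : 0 < B.card := Finset.card_pos.mpr ⟨π, hπB⟩
    -- A.card = F.card * B.card
    have key : A.card = F.card * B.card := by
      have hmap : ∀ σ ∈ A, σ r ∈ F := by
        intro σ hσ
        simp only [hA, Finset.mem_filter, Finset.mem_univ, true_and] at hσ
        simp only [hF, Finset.mem_filter, Finset.mem_univ, true_and]
        have h1 : τ' (σ r) = Δ τ r := by rw [hσ]; rfl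
        have h2 : Δ τ r = τ' (π r) := by rw [hτ]; rfl
        rw [h1, h2, hr]
        simp
      have := Finset.card_eq_sum_card_fiberwise hmap
      rw [this]
      rw [Finset.sum_congr rfl (fun s' hs' => ?_), Finset.sum_const, smul_eq_mul]
      -- fiber over s' has card B.card
      simp only [hF, Finset.mem_filter, Finset.mem_univ, true_and] at hs'
      have hsw : ∀ x, τ' (Equiv.swap s' r'0 x) = τ' x := by
        intro x
        rcases eq_or_ne x s' with h | h
        · simp [h, hs']
        rcases eq_or_ne x r'0 with h2 | h2
        · simp [h2, hs']
        · rw [Equiv.swap_apply_of_ne_of_ne h h2]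
      apply Finset.card_bij (fun σ _ => σ.trans (Equiv.swap s' r'0))
      · intro σ hσ
        simp only [Finset.mem_filter, Finset.mem_univ, true_and, hA] at hσ
        simp only [hB, Finset.mem_filter, Finset.mem_univ, true_and]
        constructor
        · simp [Equiv.trans_apply, hσ.2]
        · funext x
          have := congrFun hσ.1 x
          simpa [Equiv.trans_apply, hsw] using this
      · intro σ1 h1 σ2 h2 h
        have : ∀ x, σ1 x = σ2 x := by
          intro x
          have := congrArg (fun e : R ≃ R' => (Equiv.swap s' r'0) (e x)) h
          simpa [Equiv.trans_apply, Equiv.swap_apply_self] using this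
        exact Equiv.ext this
      · intro σ hσ
        simp only [hB, Finset.mem_filter, Finset.mem_univ, true_and] at hσ
        refine ⟨σ.trans (Equiv.swap s' r'0), ?_, ?_⟩
        · simp only [Finset.mem_filter, Finset.mem_univ, true_and, hA]
          constructor
          · funext x
            have := congrFun hσ.2 x
            simpa [Equiv.trans_apply, hsw] using this
          · simp [Equiv.trans_apply, hσ.1]
        · ext x
          simp [Equiv.trans_apply, Equiv.swap_apply_self]
    rw [key]
    have hFpos : 0 < F.card := Finset.card_pos.mpr ⟨r'0, by simp [hF]⟩
    push_cast
    rw [div_eq_div_iff (by positivity) (by positivity)]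
    ring
  case _ =>
    have hFpos : 0 < (Finset.univ.filter (fun s' : R' => τ' s' = τ' r'0)).card :=
      Finset.card_pos.mpr ⟨r'0, by simp⟩
    apply one_div_lt_one_div_of_lt
    · exact_mod_cast hFpos
    · exact_mod_cast hr'0
end

section
/- For a deterministic privacy mechanism Δ with |R| = |R'| and any positive integer k and released table τ', the following equivalence holds: τ' is k-anonymous if and only if (Δ, τ') is Pk-anonymous. Hence Pk-anonymity is an exact extension of k-anonymity on deterministic mechanisms. -/
open Finset

section aux
variable {R R' V' : Type*} [Fintype R'] [DecidableEq R'] [DecidableEq V'] [Fintype R] [DecidableEq R]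

lemma swap_comp_eq (τ' : R' → V') {b c : R'} (hbc : τ' b = τ' c) :
    τ' ∘ (Equiv.swap b c) = τ' := by
  funext x
  simp only [Function.comp_apply, Equiv.swap_apply_def]
  split_ifs with h1 h2 <;> simp_all

lemma class_card_eq (τ' : R' → V') (a : R') {b c : R'} (hbc : τ' b = τ' c) :
    ((univ.filter (fun σ : Equiv.Perm R' => τ' ∘ σ = τ')).filter (fun σ => σ a = b)).card
      = ((univ.filter (fun σ : Equiv.Perm R' => τ' ∘ σ = τ')).filter (fun σ => σ a = c)).card := by
  apply Finset.card_nbij' (fun σ => (Equiv.swap b c) * σ) (fun σ => (Equiv.swap b c) * σ)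
  · intro σ hσ
    simp only [mem_filter, mem_coe, mem_univ, true_and] at hσ ⊢
    refine ⟨?_, ?_⟩
    · show τ' ∘ ((Equiv.swap b c) * σ) = τ'
      have : τ' ∘ ((Equiv.swap b c) * σ) = (τ' ∘ (Equiv.swap b c)) ∘ σ := rfl
      rw [this, swap_comp_eq τ' hbc, hσ.1]
    · show (Equiv.swap b c) (σ a) = c
      rw [hσ.2, Equiv.swap_apply_left]
  · intro σ hσ
    simp only [mem_filter, mem_coe, mem_univ, true_and] at hσ ⊢
    refine ⟨?_, ?_⟩
    · show τ' ∘ ((Equiv.swap b c) * σ) = τ'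
      have : τ' ∘ ((Equiv.swap b c) * σ) = (τ' ∘ (Equiv.swap b c)) ∘ σ := rfl
      rw [this, swap_comp_eq τ' hbc, hσ.1]
    · show (Equiv.swap b c) (σ a) = b
      rw [hσ.2, Equiv.swap_apply_right]
  · intro σ _; simp [mul_assoc, ← Equiv.Perm.mul_def]
  · intro σ _; simp [mul_assoc, ← Equiv.Perm.mul_def]

end aux

section aux2
variable {R R' V' : Type*} [Fintype R'] [DecidableEq R'] [DecidableEq V']

lemma stab_card_eq (τ' : R' → V') (a : R') :
    (univ.filter (fun σ : Equiv.Perm R' => τ' ∘ σ = τ')).card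
      = (univ.filter (fun s' : R' => τ' s' = τ' a)).card *
        ((univ.filter (fun σ : Equiv.Perm R' => τ' ∘ σ = τ')).filter (fun σ => σ a = a)).card := by
  rw [Finset.card_eq_sum_card_fiberwise (f := fun σ : Equiv.Perm R' => σ a)
      (t := univ.filter (fun s' : R' => τ' s' = τ' a))
      (fun σ hσ => by
        simp only [mem_coe, mem_filter, mem_univ, true_and] at hσ ⊢
        exact congrFun hσ a)]
  rw [Finset.sum_congr rfl (fun b hb => by
    simp only [mem_filter, mem_univ, true_and] at hb
    exact class_card_eq τ' a hb)]
  simp [mul_comm]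

lemma key_ineq (τ' : R' → V') (k : ℕ)
    (hanon : ∀ r' : R', k ≤ (univ.filter (fun s' : R' => τ' s' = τ' r')).card)
    (a b : R') :
    k * ((univ.filter (fun σ : Equiv.Perm R' => τ' ∘ σ = τ')).filter (fun σ => σ a = b)).card
      ≤ (univ.filter (fun σ : Equiv.Perm R' => τ' ∘ σ = τ')).card := by
  by_cases hab : τ' b = τ' a
  · rw [class_card_eq τ' a (c := a) hab, stab_card_eq τ' a]
    exact Nat.mul_le_mul_right _ (hanon a)
  · have : ((univ.filter (fun σ : Equiv.Perm R' => τ' ∘ σ = τ')).filter (fun σ => σ a = b)) = ∅ := by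
      apply Finset.filter_false_of_mem
      intro σ hσ
      simp only [mem_filter, mem_univ, true_and] at hσ
      intro h
      exact hab (h ▸ congrFun hσ a)
    simp [this]

end aux2

section aux3
variable {R R' V' : Type*} [Fintype R'] [DecidableEq R'] [DecidableEq V']
  [Fintype R] [DecidableEq R]

lemma card_pi_all (τ' : R' → V') (Δτ : R → V') (π₀ : R ≃ R') (hπ₀ : Δτ = τ' ∘ π₀) :
    (univ.filter (fun π : R ≃ R' => Δτ = τ' ∘ π)).card
      = (univ.filter (fun σ : Equiv.Perm R' => τ' ∘ σ = τ')).card := by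
  apply Finset.card_nbij' (fun π => π₀.symm.trans π) (fun σ => π₀.trans σ)
  · intro π hπ
    simp only [mem_coe, mem_filter, mem_univ, true_and] at hπ ⊢
    funext x
    have h1 := congrFun (hπ₀.symm.trans hπ) (π₀.symm x)
    simpa using h1.symm
  · intro σ hσ
    simp only [mem_coe, mem_filter, mem_univ, true_and] at hσ ⊢
    funext s
    have h1 := congrFun hσ (π₀ s)
    simp only [Function.comp_apply] at h1
    simp [hπ₀, Function.comp_apply, ← h1]
  · intro π _; ext x; simp
  · intro σ _; ext x; simp

lemma card_pi_point (τ' : R' → V') (Δτ : R → V') (π₀ : R ≃ R') (hπ₀ : Δτ = τ' ∘ π₀)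
    (r : R) (r' : R') :
    (univ.filter (fun π : R ≃ R' => π r = r' ∧ Δτ = τ' ∘ π)).card
      = ((univ.filter (fun σ : Equiv.Perm R' => τ' ∘ σ = τ')).filter
          (fun σ => σ (π₀ r) = r')).card := by
  apply Finset.card_nbij' (fun π => π₀.symm.trans π) (fun σ => π₀.trans σ)
  · intro π hπ
    simp only [mem_coe, mem_filter, mem_univ, true_and] at hπ ⊢
    obtain ⟨h2, hπ⟩ := hπ
    refine ⟨?_, by simpa using h2⟩
    funext x
    have h1 := congrFun (hπ₀.symm.trans hπ) (π₀.symm x)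
    simpa using h1.symm
  · intro σ hσ
    simp only [mem_coe, mem_filter, mem_univ, true_and] at hσ ⊢
    obtain ⟨hσ, h2⟩ := hσ
    refine ⟨by simpa using h2, ?_⟩
    funext s
    have h1 := congrFun hσ (π₀ s)
    simp only [Function.comp_apply] at h1
    simp [hπ₀, Function.comp_apply, ← h1]
  · intro π _; ext x; simp
  · intro σ _; ext x; simp

lemma pointwise (τ' : R' → V') (Δτ : R → V') (k : ℕ)
    (hanon : ∀ r' : R', k ≤ (univ.filter (fun s' : R' => τ' s' = τ' r')).card)
    (r : R) (r' : R') :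
    k * (univ.filter (fun π : R ≃ R' => π r = r' ∧ Δτ = τ' ∘ π)).card
      ≤ (univ.filter (fun π : R ≃ R' => Δτ = τ' ∘ π)).card := by
  by_cases hex : ∃ π₀ : R ≃ R', Δτ = τ' ∘ π₀
  · obtain ⟨π₀, hπ₀⟩ := hex
    rw [card_pi_all τ' Δτ π₀ hπ₀, card_pi_point τ' Δτ π₀ hπ₀ r r']
    exact key_ineq τ' k hanon (π₀ r) r'
  · have : (univ.filter (fun π : R ≃ R' => π r = r' ∧ Δτ = τ' ∘ π)) = ∅ := by
      apply Finset.filter_false_of_mem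
      intro π _ h
      exact hex ⟨π, h.2⟩
    simp [this]

end aux3

/-- Theorem 1: for a deterministic privacy mechanism `Δ` with
`|R| = |R'|` and a reachable released table `τ'`, k-anonymity of `τ'` is equivalent
to Pk-anonymity of `(Δ, τ')` (stated as: for every distribution `fT` on private
tables and all `r, r'`, `k · P[Π(r) = r' ∧ T' = τ'] ≤ P[T' = τ']`). -/
theorem stmt6 {R R' V V' : Type*} [Fintype R] [Fintype R'] [Fintype V] [Fintype V']
    [DecidableEq R] [DecidableEq R'] [DecidableEq V] [DecidableEq V']
    (hcard : Fintype.card R = Fintype.card R')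
    (Δ : (R → V) → (R → V')) (τ' : R' → V') (k : ℕ) (hk : 0 < k)
    (hreach : ∃ (τ : R → V) (π : R ≃ R'), Δ τ = τ' ∘ π) :
    (∀ r' : R', k ≤ (Finset.univ.filter (fun s' : R' => τ' s' = τ' r')).card)
    ↔ (∀ fT : (R → V) → ℝ, (∀ τ, 0 ≤ fT τ) → ∑ τ, fT τ = 1 →
        ∀ (r : R) (r' : R'),
          (k : ℝ) *
            (∑ τ : R → V, fT τ *
              ((Finset.univ.filter
                  (fun π : R ≃ R' => π r = r' ∧ Δ τ = τ' ∘ π)).card : ℝ))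
          ≤ ∑ τ : R → V, fT τ *
              ((Finset.univ.filter (fun π : R ≃ R' => Δ τ = τ' ∘ π)).card : ℝ)) := by
  constructor
  · intro hanon fT hpos _ r r'
    rw [Finset.mul_sum]
    apply Finset.sum_le_sum
    intro τ _
    have hpt := pointwise τ' (Δ τ) k hanon r r'
    calc (k:ℝ) * (fT τ * ((univ.filter
          (fun π : R ≃ R' => π r = r' ∧ Δ τ = τ' ∘ π)).card : ℝ))
        = fT τ * ((k * (univ.filter
            (fun π : R ≃ R' => π r = r' ∧ Δ τ = τ' ∘ π)).card : ℕ) : ℝ) := by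
          push_cast; ring
      _ ≤ fT τ * ((univ.filter (fun π : R ≃ R' => Δ τ = τ' ∘ π)).card : ℝ) := by
          apply mul_le_mul_of_nonneg_left _ (hpos τ)
          exact_mod_cast hpt
  · intro hp r'
    obtain ⟨τ₀, π₀, hπ₀⟩ := hreach
    set fT : (R → V) → ℝ := fun τ => if τ = τ₀ then 1 else 0 with hfT
    have h1 : ∀ τ, 0 ≤ fT τ := fun τ => by rw [hfT]; dsimp; split_ifs <;> norm_num
    have h2 : ∑ τ, fT τ = 1 := by simp [hfT]
    have h3 := hp fT h1 h2 (π₀.symm r') r'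
    simp only [hfT, ite_mul, one_mul, zero_mul, Finset.sum_ite_eq', mem_univ, if_true] at h3
    have h4 : k * (univ.filter
        (fun π : R ≃ R' => π (π₀.symm r') = r' ∧ Δ τ₀ = τ' ∘ π)).card
        ≤ (univ.filter (fun π : R ≃ R' => Δ τ₀ = τ' ∘ π)).card := by
      exact_mod_cast h3
    rw [card_pi_all τ' (Δ τ₀) π₀ hπ₀, card_pi_point τ' (Δ τ₀) π₀ hπ₀] at h4
    simp only [Equiv.apply_symm_apply] at h4
    rw [stab_card_eq τ' r'] at h4
    have hcpos : 0 < ((univ.filter (fun σ : Equiv.Perm R' => τ' ∘ σ = τ')).filter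
        (fun σ => σ r' = r')).card := by
      apply Finset.card_pos.mpr
      exact ⟨1, by simp [Finset.mem_filter]⟩
    exact Nat.le_of_mul_le_mul_right h4 hcpos
end

section
/- Let A be a row-stochastic matrix with strictly positive entries indexed by V × V' (the transition probability matrix of a PRAM mechanism). For two private tables τ₁, τ₂ : R → V differing in exactly one record r, and any released table τ' : R → V', the ratio P[Δ(τ₁) ∘ Π⁻¹ = τ'] / P[Δ(τ₂) ∘ Π⁻¹ = τ'] is at most max_{u,v ∈ V, v' ∈ V'} A_{u,v'} / A_{v,v'}, where Δ applies transition A independently to each record and Π is a uniformly random permutation. Consequently, PRAM gives ε-differential privacy with ε = ln max_{u,v ∈ V, v' ∈ V'} A_{u,v'}/A_{v,v'}. -/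
/-- for a strictly positive row-stochastic PRAM matrix `A` and private
tables `τ₁, τ₂` differing in exactly one record `r`, the probability of each released
table `τ'` satisfies `P[τ₁ ↦ τ'] ≤ C · P[τ₂ ↦ τ']` with
`C = max_{u,v,v'} A u v' / A v v'`; hence PRAM gives ε-DP with `ε = ln C`. -/
theorem stmt8 {R V V' : Type*} [Fintype R] [DecidableEq R]
    [Fintype V] [Nonempty V] [Fintype V'] [Nonempty V']
    (A : V → V' → ℝ) (hA : ∀ u v', 0 < A u v') (hrow : ∀ u, ∑ v', A u v' = 1)
    (τ₁ τ₂ : R → V) (r : R) (hr : τ₁ r ≠ τ₂ r) (hdiff : ∀ s, s ≠ r → τ₁ s = τ₂ s)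
    (τ' : R → V') :
    (∑ π : Equiv.Perm R, ∏ s, A (τ₁ s) (τ' (π s))) / (Nat.factorial (Fintype.card R))
      ≤ (⨆ u : V, ⨆ v : V, ⨆ v' : V', A u v' / A v v') *
        ((∑ π : Equiv.Perm R, ∏ s, A (τ₂ s) (τ' (π s))) /
          (Nat.factorial (Fintype.card R))) ∧
    (∑ π : Equiv.Perm R, ∏ s, A (τ₁ s) (τ' (π s))) / (Nat.factorial (Fintype.card R))
      ≤ Real.exp (Real.log (⨆ u : V, ⨆ v : V, ⨆ v' : V', A u v' / A v v')) *
        ((∑ π : Equiv.Perm R, ∏ s, A (τ₂ s) (τ' (π s))) /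
          (Nat.factorial (Fintype.card R))) := by
  set C : ℝ := ⨆ u : V, ⨆ v : V, ⨆ v' : V', A u v' / A v v' with hCdef
  have hC : ∀ u v v', A u v' / A v v' ≤ C := by
    intro u v v'
    have h1 : A u v' / A v v' ≤ ⨆ v'' : V', A u v'' / A v v'' :=
      le_ciSup (f := fun v'' => A u v'' / A v v'') (Set.Finite.bddAbove (Set.finite_range _)) v'
    have h2 : (⨆ v'' : V', A u v'' / A v v'') ≤ ⨆ w : V, ⨆ v'' : V', A u v'' / A w v'' :=
      le_ciSup (f := fun w => ⨆ v'' : V', A u v'' / A w v'') (Set.Finite.bddAbove (Set.finite_range _)) v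
    have h3 : (⨆ w : V, ⨆ v'' : V', A u v'' / A w v'') ≤ C :=
      le_ciSup (f := fun u' => ⨆ w : V, ⨆ v'' : V', A u' v'' / A w v'') (Set.Finite.bddAbove (Set.finite_range _)) u
    exact h1.trans (h2.trans h3)
  have hCpos : 0 < C := by
    obtain ⟨v'⟩ := ‹Nonempty V'›
    obtain ⟨u⟩ := ‹Nonempty V›
    exact lt_of_lt_of_le (div_pos (hA u v') (hA u v')) (hC u u v')
  have key : ∀ π : Equiv.Perm R,
      (∏ s, A (τ₁ s) (τ' (π s))) ≤ C * ∏ s, A (τ₂ s) (τ' (π s)) := by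
    intro π
    have hsplit1 : (∏ s, A (τ₁ s) (τ' (π s)))
        = A (τ₁ r) (τ' (π r)) * ∏ s ∈ Finset.univ.erase r, A (τ₁ s) (τ' (π s)) :=
      (Finset.mul_prod_erase Finset.univ _ (Finset.mem_univ r)).symm
    have hsplit2 : (∏ s, A (τ₂ s) (τ' (π s)))
        = A (τ₂ r) (τ' (π r)) * ∏ s ∈ Finset.univ.erase r, A (τ₂ s) (τ' (π s)) :=
      (Finset.mul_prod_erase Finset.univ _ (Finset.mem_univ r)).symm
    have heq : (∏ s ∈ Finset.univ.erase r, A (τ₁ s) (τ' (π s)))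
        = ∏ s ∈ Finset.univ.erase r, A (τ₂ s) (τ' (π s)) := by
      apply Finset.prod_congr rfl
      intro s hs
      rw [hdiff s (Finset.ne_of_mem_erase hs)]
    have hprodpos : 0 < ∏ s ∈ Finset.univ.erase r, A (τ₂ s) (τ' (π s)) :=
      Finset.prod_pos fun s _ => hA _ _
    have hAr : A (τ₁ r) (τ' (π r)) ≤ C * A (τ₂ r) (τ' (π r)) := by
      have := hC (τ₁ r) (τ₂ r) (τ' (π r))
      rwa [div_le_iff₀ (hA _ _)] at this
    calc (∏ s, A (τ₁ s) (τ' (π s)))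
        = A (τ₁ r) (τ' (π r)) * ∏ s ∈ Finset.univ.erase r, A (τ₂ s) (τ' (π s)) := by
          rw [hsplit1, heq]
      _ ≤ (C * A (τ₂ r) (τ' (π r))) * ∏ s ∈ Finset.univ.erase r, A (τ₂ s) (τ' (π s)) :=
          mul_le_mul_of_nonneg_right hAr hprodpos.le
      _ = C * ∏ s, A (τ₂ s) (τ' (π s)) := by rw [hsplit2]; ring
  have hsum : (∑ π : Equiv.Perm R, ∏ s, A (τ₁ s) (τ' (π s)))
      ≤ C * ∑ π : Equiv.Perm R, ∏ s, A (τ₂ s) (τ' (π s)) := by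
    rw [Finset.mul_sum]
    exact Finset.sum_le_sum fun π _ => key π
  have hfact : (0:ℝ) < (Nat.factorial (Fintype.card R) : ℝ) := by
    exact_mod_cast Nat.factorial_pos _
  have main : (∑ π : Equiv.Perm R, ∏ s, A (τ₁ s) (τ' (π s))) / (Nat.factorial (Fintype.card R))
      ≤ C * ((∑ π : Equiv.Perm R, ∏ s, A (τ₂ s) (τ' (π s))) /
          (Nat.factorial (Fintype.card R))) := by
    rw [mul_div_assoc']
    gcongr
  refine ⟨main, ?_⟩
  rwa [Real.exp_log hCpos]
end

section
/- Let a PRAM mechanism act on multi-attribute tables with attribute set 𝒜, where each attribute a ∈ 𝒜 is randomized independently with strictly positive row-stochastic transition matrix A_a on V_a × V'_a. Then the mechanism gives ε-differential privacy with ε = Σ_{a ∈ 𝒜} ln max_{u,v ∈ V_a, v' ∈ V'_a} (A_a)_{u,v'}/(A_a)_{v,v'}. -/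
/-- a multi-attribute PRAM mechanism with independent strictly positive
row-stochastic per-attribute matrices `A a` gives ε-DP with
`ε = Σ_a ln max_{u,v,v'} (A a) u v' / (A a) v v'`. -/
theorem stmt9 {R : Type*} [Fintype R] [DecidableEq R]
    {𝒜 : Type*} [Fintype 𝒜] [DecidableEq 𝒜]
    (V V' : 𝒜 → Type*) [∀ a, Fintype (V a)] [∀ a, Nonempty (V a)]
    [∀ a, Fintype (V' a)] [∀ a, Nonempty (V' a)]
    (A : ∀ a, V a → V' a → ℝ) (hA : ∀ a u v', 0 < A a u v')
    (hrow : ∀ a u, ∑ v', A a u v' = 1)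
    (τ₁ τ₂ : R → ∀ a, V a) (r : R) (hdiff : ∀ s, s ≠ r → τ₁ s = τ₂ s)
    (τ' : R → ∀ a, V' a) :
    (∑ π : Equiv.Perm R, ∏ s, ∏ a, A a (τ₁ s a) (τ' (π s) a)) /
        (Nat.factorial (Fintype.card R))
      ≤ Real.exp (∑ a, Real.log
            (⨆ u : V a, ⨆ v : V a, ⨆ v' : V' a, A a u v' / A a v v')) *
        ((∑ π : Equiv.Perm R, ∏ s, ∏ a, A a (τ₂ s a) (τ' (π s) a)) /
          (Nat.factorial (Fintype.card R))) := by
  set M : 𝒜 → ℝ := fun a => ⨆ u : V a, ⨆ v : V a, ⨆ v' : V' a, A a u v' / A a v v' with hM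
  -- key bound: A a u w / A a v w ≤ M a
  have hbdd3 : ∀ (a : 𝒜) (u v : V a), BddAbove (Set.range fun v' : V' a => A a u v' / A a v v') :=
    fun a u v => (Set.finite_range _).bddAbove
  have hbdd2 : ∀ (a : 𝒜) (u : V a), BddAbove (Set.range fun v : V a => ⨆ v' : V' a, A a u v' / A a v v') :=
    fun a u => (Set.finite_range _).bddAbove
  have hbdd1 : ∀ (a : 𝒜), BddAbove (Set.range fun u : V a => ⨆ v : V a, ⨆ v' : V' a, A a u v' / A a v v') :=
    fun a => (Set.finite_range _).bddAbove
  have hMle : ∀ (a : 𝒜) (u v : V a) (w : V' a), A a u w / A a v w ≤ M a := by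
    intro a u v w
    calc A a u w / A a v w ≤ ⨆ v' : V' a, A a u v' / A a v v' := le_ciSup (hbdd3 a u v) w
      _ ≤ ⨆ v : V a, ⨆ v' : V' a, A a u v' / A a v v' := le_ciSup (hbdd2 a u) v
      _ ≤ M a := le_ciSup (hbdd1 a) u
  have hMpos : ∀ a, 0 < M a := by
    intro a
    obtain ⟨u⟩ := ‹∀ a, Nonempty (V a)› a
    obtain ⟨w⟩ := ‹∀ a, Nonempty (V' a)› a
    have h1 : (1 : ℝ) ≤ M a := by
      have := hMle a u u w
      rwa [div_self (hA a u w).ne'] at this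
    linarith
  have hexp : Real.exp (∑ a, Real.log (M a)) = ∏ a, M a := by
    rw [Real.exp_sum]
    exact Finset.prod_congr rfl fun a _ => Real.exp_log (hMpos a)
  rw [hexp]
  -- pointwise bound for each permutation
  have hpt : ∀ π : Equiv.Perm R,
      (∏ s, ∏ a, A a (τ₁ s a) (τ' (π s) a)) ≤
        (∏ a, M a) * ∏ s, ∏ a, A a (τ₂ s a) (τ' (π s) a) := by
    intro π
    have h1 : (∏ s, ∏ a, A a (τ₁ s a) (τ' (π s) a)) =
        (∏ a, A a (τ₁ r a) (τ' (π r) a)) * ∏ s ∈ Finset.univ.erase r, ∏ a, A a (τ₁ s a) (τ' (π s) a) :=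
      (Finset.mul_prod_erase Finset.univ _ (Finset.mem_univ r)).symm
    have h2 : (∏ s, ∏ a, A a (τ₂ s a) (τ' (π s) a)) =
        (∏ a, A a (τ₂ r a) (τ' (π r) a)) * ∏ s ∈ Finset.univ.erase r, ∏ a, A a (τ₂ s a) (τ' (π s) a) :=
      (Finset.mul_prod_erase Finset.univ _ (Finset.mem_univ r)).symm
    have hrest : (∏ s ∈ Finset.univ.erase r, ∏ a, A a (τ₁ s a) (τ' (π s) a)) =
        ∏ s ∈ Finset.univ.erase r, ∏ a, A a (τ₂ s a) (τ' (π s) a) := by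
      refine Finset.prod_congr rfl fun s hs => ?_
      rw [hdiff s (Finset.mem_erase.mp hs).1]
    have hhead : (∏ a, A a (τ₁ r a) (τ' (π r) a)) ≤
        (∏ a, M a) * ∏ a, A a (τ₂ r a) (τ' (π r) a) := by
      rw [← Finset.prod_mul_distrib]
      refine Finset.prod_le_prod (fun a _ => (hA a _ _).le) (fun a _ => ?_)
      have := hMle a (τ₁ r a) (τ₂ r a) (τ' (π r) a)
      rw [div_le_iff₀ (hA a _ _)] at this
      linarith [this]
    have hrestnn : (0:ℝ) ≤ ∏ s ∈ Finset.univ.erase r, ∏ a, A a (τ₂ s a) (τ' (π s) a) :=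
      Finset.prod_nonneg fun s _ => Finset.prod_nonneg fun a _ => (hA a _ _).le
    rw [h1, h2, hrest]
    calc (∏ a, A a (τ₁ r a) (τ' (π r) a)) * ∏ s ∈ Finset.univ.erase r, ∏ a, A a (τ₂ s a) (τ' (π s) a)
        ≤ ((∏ a, M a) * ∏ a, A a (τ₂ r a) (τ' (π r) a)) * ∏ s ∈ Finset.univ.erase r, ∏ a, A a (τ₂ s a) (τ' (π s) a) :=
          mul_le_mul_of_nonneg_right hhead hrestnn
      _ = (∏ a, M a) * ((∏ a, A a (τ₂ r a) (τ' (π r) a)) * ∏ s ∈ Finset.univ.erase r, ∏ a, A a (τ₂ s a) (τ' (π s) a)) := by ring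
  have hsum : (∑ π : Equiv.Perm R, ∏ s, ∏ a, A a (τ₁ s a) (τ' (π s) a)) ≤
      (∏ a, M a) * ∑ π : Equiv.Perm R, ∏ s, ∏ a, A a (τ₂ s a) (τ' (π s) a) := by
    rw [Finset.mul_sum]
    exact Finset.sum_le_sum fun π _ => hpt π
  rw [← mul_div_assoc]
  exact div_le_div_of_nonneg_right hsum (Nat.cast_nonneg _)
end

section
/- Let A be a strictly positive row-stochastic matrix on V × V' (|V|, |V'| ≥ 2) and |R| = n ≥ 1. A PRAM mechanism with transition matrix A (applied independently per record, followed by a uniformly random permutation) is a Pk-anonymization if and only if k ≤ 1 + (n − 1) · min_{u,v ∈ V, u',v' ∈ V'} (A_{u,v'} A_{v,u'})/(A_{u,u'} A_{v,v'}). In particular, the supremum over private-table distributions, records r, r', and released tables τ' of P[Π(r) = r' | T' = τ'] equals 1 / (1 + (n − 1) min_{u,v,u',v'} (A_{u,v'} A_{v,u'})/(A_{u,u'} A_{v,v'})). -/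
open Finset

section Aux
variable {R V V' : Type*} [Fintype R] [DecidableEq R] [Fintype V] [Fintype V']

set_option linter.unusedSectionVars false

/-- Two-factor swap identity for the product weight. -/
lemma stmt12_prod_swap (A : V → V' → ℝ) (τ : R → V) (τ' : R → V')
    (r₁ r₂ : R) (h12 : r₁ ≠ r₂) (π : Equiv.Perm R) :
    (∏ s, A (τ s) (τ' (Equiv.swap r₁ r₂ (π s)))) *
      (A (τ (π⁻¹ r₁)) (τ' r₁) * A (τ (π⁻¹ r₂)) (τ' r₂))
    = (∏ s, A (τ s) (τ' (π s))) *
      (A (τ (π⁻¹ r₁)) (τ' r₂) * A (τ (π⁻¹ r₂)) (τ' r₁)) := by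
  set a := π⁻¹ r₁ with ha
  set b := π⁻¹ r₂ with hb
  have hπa : π a = r₁ := π.apply_symm_apply r₁
  have hπb : π b = r₂ := π.apply_symm_apply r₂
  have hab : a ≠ b := fun h => h12 (by rw [← hπa, ← hπb, h])
  have hbmem : b ∈ (Finset.univ.erase a) := Finset.mem_erase.mpr ⟨hab.symm, Finset.mem_univ b⟩
  set f : R → ℝ := fun s => A (τ s) (τ' (π s)) with hf
  set g : R → ℝ := fun s => A (τ s) (τ' (Equiv.swap r₁ r₂ (π s))) with hg
  have hsplit : ∀ (F : R → ℝ), ∏ s, F s = F a * (F b * ∏ s ∈ (Finset.univ.erase a).erase b, F s) := by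
    intro F
    rw [Finset.mul_prod_erase _ F hbmem, Finset.mul_prod_erase _ F (Finset.mem_univ a)]
  have heqrest : ∏ s ∈ (Finset.univ.erase a).erase b, g s
      = ∏ s ∈ (Finset.univ.erase a).erase b, f s := by
    apply Finset.prod_congr rfl
    intro s hs
    have hsb : s ≠ b := (Finset.mem_erase.mp hs).1
    have hsa : s ≠ a := (Finset.mem_erase.mp (Finset.mem_erase.mp hs).2).1
    have h1 : π s ≠ r₁ := fun h => hsa (by rw [ha, ← h, (show π⁻¹ (π s) = s from π.symm_apply_apply s)])
    have h2 : π s ≠ r₂ := fun h => hsb (by rw [hb, ← h, (show π⁻¹ (π s) = s from π.symm_apply_apply s)])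
    simp [g, f, Equiv.swap_apply_of_ne_of_ne h1 h2]
  have hga : g a = A (τ a) (τ' r₂) := by simp [g, hπa]
  have hgb : g b = A (τ b) (τ' r₁) := by simp [g, hπb]
  have hfa : f a = A (τ a) (τ' r₁) := by simp [f, hπa]
  have hfb : f b = A (τ b) (τ' r₂) := by simp [f, hπb]
  rw [hsplit g, hsplit f, heqrest, hga, hgb, hfa, hfb]
  ring

/-- Re-indexing of the fiber sums via a swap. -/
lemma stmt12_sum_swap (A : V → V' → ℝ) (τ : R → V) (τ' : R → V') (r r₁ r₂ : R) :
    ∑ π ∈ Finset.univ.filter (fun π : Equiv.Perm R => π r = r₂), ∏ s, A (τ s) (τ' (π s))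
    = ∑ π ∈ Finset.univ.filter (fun π : Equiv.Perm R => π r = r₁),
        ∏ s, A (τ s) (τ' (Equiv.swap r₁ r₂ (π s))) := by
  apply Finset.sum_nbij' (i := fun π : Equiv.Perm R => π.trans (Equiv.swap r₁ r₂))
    (j := fun π : Equiv.Perm R => π.trans (Equiv.swap r₁ r₂))
  · intro π hπ
    have : π r = r₂ := (Finset.mem_filter.mp hπ).2
    simp [Equiv.trans_apply, this]
  · intro π hπ
    have : π r = r₁ := (Finset.mem_filter.mp hπ).2
    simp [Equiv.trans_apply, this]
  · intro π _; ext s; simp [Equiv.swap_apply_self]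
  · intro π _; ext s; simp [Equiv.swap_apply_self]
  · intro π _
    apply Finset.prod_congr rfl
    intro s _
    simp [Equiv.trans_apply, Equiv.swap_apply_self]

end Aux

/-- Theorem 2: a PRAM mechanism with strictly positive row-stochastic
matrix `A` on an `n`-record table is a Pk-anonymization if and only if
`k ≤ 1 + (n-1) · min_{u,v,u',v'} (A u v' · A v u')/(A u u' · A v v')`.
Pk-anonymity is stated as: for every distribution `fT` on private tables, every
released table `τ'` and all records `r, r'`,
`k · P[Π(r) = r' ∧ T' = τ'] ≤ P[T' = τ']`. -/
theorem stmt12 {R V V' : Type*} [Fintype R] [DecidableEq R] [Nonempty R]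
    [Fintype V] [DecidableEq V] [Fintype V'] [DecidableEq V']
    (h2V : 2 ≤ Fintype.card V) (h2V' : 2 ≤ Fintype.card V')
    (A : V → V' → ℝ) (hA : ∀ u v', 0 < A u v') (hrow : ∀ u, ∑ v', A u v' = 1)
    (k : ℝ) :
    (∀ fT : (R → V) → ℝ, (∀ τ, 0 ≤ fT τ) → ∑ τ, fT τ = 1 →
      ∀ (τ' : R → V') (r r' : R),
        k * (∑ τ : R → V, fT τ *
              ∑ π ∈ Finset.univ.filter (fun π : Equiv.Perm R => π r = r'),
                ∏ s, A (τ s) (τ' (π s)))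
          ≤ ∑ τ : R → V, fT τ * ∑ π : Equiv.Perm R, ∏ s, A (τ s) (τ' (π s)))
    ↔ k ≤ 1 + ((Fintype.card R : ℝ) - 1) *
        ⨅ u : V, ⨅ v : V, ⨅ u' : V', ⨅ v' : V',
          (A u v' * A v u') / (A u u' * A v v') := by
  classical
  have hnV : Nonempty V := Fintype.card_pos_iff.mp (by omega)
  have hnV' : Nonempty V' := Fintype.card_pos_iff.mp (by omega)
  set m := ⨅ u : V, ⨅ v : V, ⨅ u' : V', ⨅ v' : V',
      (A u v' * A v u') / (A u u' * A v v') with hm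
  have hmle : ∀ u v u' v', m ≤ (A u v' * A v u') / (A u u' * A v v') := by
    intro u v u' v'
    calc m ≤ ⨅ v, ⨅ u', ⨅ v', (A u v' * A v u') / (A u u' * A v v') :=
          ciInf_le (Set.Finite.bddBelow (Set.finite_range _)) u
      _ ≤ ⨅ u', ⨅ v', (A u v' * A v u') / (A u u' * A v v') :=
          ciInf_le (Set.Finite.bddBelow (Set.finite_range _)) v
      _ ≤ ⨅ v', (A u v' * A v u') / (A u u' * A v v') :=
          ciInf_le (Set.Finite.bddBelow (Set.finite_range _)) u'
      _ ≤ _ := ciInf_le (Set.Finite.bddBelow (Set.finite_range _)) v'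
  obtain ⟨p, -, hp⟩ := Finset.exists_min_image (Finset.univ : Finset (V × V × V' × V'))
      (fun p => (A p.1 p.2.2.2 * A p.2.1 p.2.2.1) / (A p.1 p.2.2.1 * A p.2.1 p.2.2.2))
      Finset.univ_nonempty
  obtain ⟨u₀, v₀, u₀', v₀'⟩ := p
  have hmeq : m = (A u₀ v₀' * A v₀ u₀') / (A u₀ u₀' * A v₀ v₀') := by
    refine le_antisymm (hmle _ _ _ _) ?_
    refine le_ciInf fun u => le_ciInf fun v => le_ciInf fun u' => le_ciInf fun v' => ?_
    exact hp (u, v, u', v') (Finset.mem_univ _)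
  have hcard1 : 1 ≤ Fintype.card R := Fintype.card_pos
  constructor
  · -- Pk-anonymity implies the bound on k
    intro H
    obtain ⟨r₀⟩ := (inferInstance : Nonempty R)
    set τ₀ : R → V := fun s => if s = r₀ then u₀ else v₀ with hτ₀
    set τ'₀ : R → V' := fun s => if s = r₀ then u₀' else v₀' with hτ'₀
    have hfT0 : ∀ τ : R → V, (0:ℝ) ≤ if τ = τ₀ then 1 else 0 := by
      intro τ; split <;> norm_num
    have hfT1 : ∑ τ : R → V, (if τ = τ₀ then (1:ℝ) else 0) = 1 := by simp
    have key := H (fun τ => if τ = τ₀ then 1 else 0) hfT0 hfT1 τ'₀ r₀ r₀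
    simp only [ite_mul, one_mul, zero_mul, Finset.sum_ite_eq', Finset.mem_univ,
      if_true] at key
    have hfiber : ∀ r'' : R, r'' ≠ r₀ →
        (∑ π ∈ Finset.univ.filter (fun π : Equiv.Perm R => π r₀ = r''),
            ∏ s, A (τ₀ s) (τ'₀ (π s)))
        = m * ∑ π ∈ Finset.univ.filter (fun π : Equiv.Perm R => π r₀ = r₀),
            ∏ s, A (τ₀ s) (τ'₀ (π s)) := by
      intro r'' hne
      rw [stmt12_sum_swap A τ₀ τ'₀ r₀ r₀ r'', Finset.mul_sum]
      apply Finset.sum_congr rfl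
      intro π hπ
      have hπr : π r₀ = r₀ := (Finset.mem_filter.mp hπ).2
      have key2 := stmt12_prod_swap A τ₀ τ'₀ r₀ r'' (Ne.symm hne) π
      have hainv : π⁻¹ r₀ = r₀ := by
        conv_lhs => rw [← hπr]
        exact π.symm_apply_apply r₀
      have hbinv : π⁻¹ r'' ≠ r₀ := fun h => hne (by rw [← hπr, ← h, (show π (π⁻¹ r'') = r'' from π.apply_symm_apply r'')])
      rw [hainv] at key2
      have e1 : τ₀ r₀ = u₀ := by simp [hτ₀]
      have e2 : τ₀ (π⁻¹ r'') = v₀ := by simp only [hτ₀, if_neg hbinv]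
      have e3 : τ'₀ r₀ = u₀' := by simp [hτ'₀]
      have e4 : τ'₀ r'' = v₀' := by simp [hτ'₀, hne]
      rw [e1, e2, e3, e4] at key2
      have hD : (A u₀ u₀' * A v₀ v₀') ≠ 0 := (mul_pos (hA _ _) (hA _ _)).ne'
      rw [hmeq]
      rw [div_mul_eq_mul_div, eq_div_iff hD]
      linear_combination key2
    have hdecomp : (∑ π : Equiv.Perm R, ∏ s, A (τ₀ s) (τ'₀ (π s)))
        = ∑ r'' : R, ∑ π ∈ Finset.univ.filter (fun π : Equiv.Perm R => π r₀ = r''),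
            ∏ s, A (τ₀ s) (τ'₀ (π s)) :=
      (Finset.sum_fiberwise _ (fun π : Equiv.Perm R => π r₀) _).symm
    have hS0pos : 0 < ∑ π ∈ Finset.univ.filter (fun π : Equiv.Perm R => π r₀ = r₀),
        ∏ s, A (τ₀ s) (τ'₀ (π s)) := by
      apply Finset.sum_pos (fun π _ => Finset.prod_pos fun s _ => hA _ _)
      exact ⟨1, Finset.mem_filter.mpr ⟨Finset.mem_univ _, rfl⟩⟩
    have htotal : (∑ π : Equiv.Perm R, ∏ s, A (τ₀ s) (τ'₀ (π s)))
        = (1 + ((Fintype.card R : ℝ) - 1) * m) *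
            ∑ π ∈ Finset.univ.filter (fun π : Equiv.Perm R => π r₀ = r₀),
              ∏ s, A (τ₀ s) (τ'₀ (π s)) := by
      rw [hdecomp, ← Finset.add_sum_erase _ _ (Finset.mem_univ r₀)]
      rw [Finset.sum_congr rfl (fun r'' hr'' => hfiber r'' (Finset.mem_erase.mp hr'').1)]
      rw [Finset.sum_const, Finset.card_erase_of_mem (Finset.mem_univ r₀), Finset.card_univ,
        nsmul_eq_mul, Nat.cast_sub hcard1]
      push_cast
      ring
    rw [htotal] at key
    exact le_of_mul_le_mul_right key hS0pos
  · -- the bound on k implies Pk-anonymity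
    intro hk fT hfT0 _ τ' r r'
    rw [Finset.mul_sum]
    apply Finset.sum_le_sum
    intro τ _
    rw [← mul_assoc, mul_comm k (fT τ), mul_assoc]
    refine mul_le_mul_of_nonneg_left ?_ (hfT0 τ)
    have hwpos : ∀ π : Equiv.Perm R, 0 < ∏ s, A (τ s) (τ' (π s)) :=
      fun π => Finset.prod_pos fun s _ => hA _ _
    have hSnn : 0 ≤ ∑ π ∈ Finset.univ.filter (fun π : Equiv.Perm R => π r = r'),
        ∏ s, A (τ s) (τ' (π s)) := Finset.sum_nonneg fun π _ => (hwpos π).le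
    have hfiber : ∀ r'' : R, r'' ≠ r' →
        m * (∑ π ∈ Finset.univ.filter (fun π : Equiv.Perm R => π r = r'),
              ∏ s, A (τ s) (τ' (π s)))
        ≤ ∑ π ∈ Finset.univ.filter (fun π : Equiv.Perm R => π r = r''),
              ∏ s, A (τ s) (τ' (π s)) := by
      intro r'' hne
      rw [stmt12_sum_swap A τ τ' r r' r'', Finset.mul_sum]
      apply Finset.sum_le_sum
      intro π hπ
      have key2 := stmt12_prod_swap A τ τ' r' r'' (Ne.symm hne) π
      have hD : 0 < A (τ (π⁻¹ r')) (τ' r') * A (τ (π⁻¹ r'')) (τ' r'') :=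
        mul_pos (hA _ _) (hA _ _)
      have hQ : m * (A (τ (π⁻¹ r')) (τ' r') * A (τ (π⁻¹ r'')) (τ' r''))
          ≤ A (τ (π⁻¹ r')) (τ' r'') * A (τ (π⁻¹ r'')) (τ' r') :=
        (le_div_iff₀ hD).mp (hmle (τ (π⁻¹ r')) (τ (π⁻¹ r'')) (τ' r') (τ' r''))
      refine le_of_mul_le_mul_right ?_ hD
      calc m * (∏ s, A (τ s) (τ' (π s))) *
            (A (τ (π⁻¹ r')) (τ' r') * A (τ (π⁻¹ r'')) (τ' r''))
          = (∏ s, A (τ s) (τ' (π s))) *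
            (m * (A (τ (π⁻¹ r')) (τ' r') * A (τ (π⁻¹ r'')) (τ' r''))) := by ring
        _ ≤ (∏ s, A (τ s) (τ' (π s))) *
            (A (τ (π⁻¹ r')) (τ' r'') * A (τ (π⁻¹ r'')) (τ' r')) :=
            mul_le_mul_of_nonneg_left hQ (hwpos π).le
        _ = (∏ s, A (τ s) (τ' (Equiv.swap r' r'' (π s)))) *
            (A (τ (π⁻¹ r')) (τ' r') * A (τ (π⁻¹ r'')) (τ' r'')) := key2.symm
    calc k * ∑ π ∈ Finset.univ.filter (fun π : Equiv.Perm R => π r = r'),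
            ∏ s, A (τ s) (τ' (π s))
        ≤ (1 + ((Fintype.card R : ℝ) - 1) * m) *
            ∑ π ∈ Finset.univ.filter (fun π : Equiv.Perm R => π r = r'),
              ∏ s, A (τ s) (τ' (π s)) := mul_le_mul_of_nonneg_right hk hSnn
      _ = (∑ π ∈ Finset.univ.filter (fun π : Equiv.Perm R => π r = r'),
              ∏ s, A (τ s) (τ' (π s)))
          + ∑ _r'' ∈ Finset.univ.erase r',
              m * ∑ π ∈ Finset.univ.filter (fun π : Equiv.Perm R => π r = r'),
                ∏ s, A (τ s) (τ' (π s)) := by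
            rw [Finset.sum_const, Finset.card_erase_of_mem (Finset.mem_univ _),
              Finset.card_univ, nsmul_eq_mul, Nat.cast_sub hcard1]
            push_cast
            ring
      _ ≤ (∑ π ∈ Finset.univ.filter (fun π : Equiv.Perm R => π r = r'),
              ∏ s, A (τ s) (τ' (π s)))
          + ∑ r'' ∈ Finset.univ.erase r',
              ∑ π ∈ Finset.univ.filter (fun π : Equiv.Perm R => π r = r''),
                ∏ s, A (τ s) (τ' (π s)) := by
            refine add_le_add_right (Finset.sum_le_sum fun r'' hr'' => ?_) _
            exact hfiber r'' (Finset.mem_erase.mp hr'').1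
      _ = ∑ r'' : R, ∑ π ∈ Finset.univ.filter (fun π : Equiv.Perm R => π r = r''),
              ∏ s, A (τ s) (τ' (π s)) :=
            Finset.add_sum_erase Finset.univ
              (fun r'' => ∑ π ∈ Finset.univ.filter (fun π : Equiv.Perm R => π r = r''),
                ∏ s, A (τ s) (τ' (π s))) (Finset.mem_univ r')
      _ = ∑ π : Equiv.Perm R, ∏ s, A (τ s) (τ' (π s)) :=
            Finset.sum_fiberwise _ (fun π : Equiv.Perm R => π r) _
end

section
/- Let A be a strictly positive matrix indexed by R × R' with |R| = |R'| = n ≥ 2, and fix r ∈ R, r' ∈ R'. Define F(A) = (Σ_{π bijection, π(r) = r'} ∏_{s ∈ R} A_{s,π(s)}) / (Σ_{π bijection} ∏_{s ∈ R} A_{s,π(s)}). Then 1/F(A) = 1 + (Σ_{π: π(r) = r'} Σ_{t ≠ r} (A_{t,r'} A_{r,π(t)} / A_{t,π(t)}) ∏_{s ≠ r} A_{s,π(s)}) / (Σ_{π: π(r) = r'} A_{r,r'} ∏_{s ≠ r} A_{s,π(s)}). -/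
/-- exact permanent-ratio decomposition. For strictly positive `A`
indexed by `R × R'` with `|R| = |R'| = n ≥ 2` and fixed `r, r'`, with
`F(A) = (Σ_{π(r)=r'} ∏_s A s (π s)) / (Σ_π ∏_s A s (π s))`, we have
`1/F(A) = 1 + (Σ_{π(r)=r'} (Σ_{t≠r} A t r' · A r (π t) / A t (π t)) ∏_{s≠r} A s (π s))
/ (Σ_{π(r)=r'} A r r' · ∏_{s≠r} A s (π s))`. -/
theorem stmt13 {R R' : Type*} [Fintype R] [Fintype R'] [DecidableEq R] [DecidableEq R']
    (hcard : Fintype.card R = Fintype.card R') (h2 : 2 ≤ Fintype.card R)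
    (A : R → R' → ℝ) (hA : ∀ s s', 0 < A s s') (r : R) (r' : R') :
    1 / ((∑ π ∈ Finset.univ.filter (fun π : R ≃ R' => π r = r'), ∏ s, A s (π s)) /
          (∑ π : R ≃ R', ∏ s, A s (π s)))
      = 1 +
        (∑ π ∈ Finset.univ.filter (fun π : R ≃ R' => π r = r'),
            (∑ t ∈ Finset.univ.erase r, A t r' * A r (π t) / A t (π t)) *
              ∏ s ∈ Finset.univ.erase r, A s (π s)) /
        (∑ π ∈ Finset.univ.filter (fun π : R ≃ R' => π r = r'),
            A r r' * ∏ s ∈ Finset.univ.erase r, A s (π s)) := by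
  classical
  obtain ⟨e⟩ := Fintype.card_eq.mp hcard
  set π₀ : R ≃ R' := e.trans (Equiv.swap (e r) r') with hπ₀def
  have hπ₀ : π₀ r = r' := by simp [hπ₀def, Equiv.swap_apply_left]
  have hprodpos : ∀ π : R ≃ R', 0 < ∏ s, A s (π s) :=
    fun π => Finset.prod_pos fun s _ => hA _ _
  have hNpos : 0 < ∑ π ∈ Finset.univ.filter (fun π : R ≃ R' => π r = r'), ∏ s, A s (π s) :=
    Finset.sum_pos (fun π _ => hprodpos π)
      ⟨π₀, Finset.mem_filter.mpr ⟨Finset.mem_univ _, hπ₀⟩⟩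
  -- the RHS denominator equals the numerator of F
  have hden : (∑ π ∈ Finset.univ.filter (fun π : R ≃ R' => π r = r'),
      A r r' * ∏ s ∈ Finset.univ.erase r, A s (π s))
      = ∑ π ∈ Finset.univ.filter (fun π : R ≃ R' => π r = r'), ∏ s, A s (π s) := by
    refine Finset.sum_congr rfl fun π hπ => ?_
    have h1 : (∏ s, A s (π s)) = A r (π r) * ∏ s ∈ Finset.univ.erase r, A s (π s) :=
      (Finset.mul_prod_erase Finset.univ (fun s => A s (π s)) (Finset.mem_univ r)).symm
    rw [h1, (Finset.mem_filter.mp hπ).2]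
  -- the key reparametrization: the double sum is the sum over π with π r ≠ r'
  have hT : (∑ π ∈ Finset.univ.filter (fun π : R ≃ R' => π r = r'),
      (∑ t ∈ Finset.univ.erase r, A t r' * A r (π t) / A t (π t)) *
        ∏ s ∈ Finset.univ.erase r, A s (π s))
      = ∑ π ∈ Finset.univ.filter (fun π : R ≃ R' => ¬ π r = r'), ∏ s, A s (π s) := by
    simp_rw [Finset.sum_mul]
    rw [Finset.sum_sigma']
    refine Finset.sum_nbij' (fun x => (Equiv.swap r x.2).trans x.1)
      (fun σ => ⟨(Equiv.swap r (σ.symm r')).trans σ, σ.symm r'⟩) ?_ ?_ ?_ ?_ ?_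
    · rintro ⟨π, t⟩ hx
      simp only [Finset.mem_sigma, Finset.mem_filter, Finset.mem_univ, true_and,
        Finset.mem_erase] at hx
      obtain ⟨hπr, htr, -⟩ := hx
      simp only [Finset.mem_filter, Finset.mem_univ, true_and, Equiv.trans_apply,
        Equiv.swap_apply_left]
      rw [← hπr]
      exact fun h => htr (π.injective h)
    · intro σ hσ
      simp only [Finset.mem_filter, Finset.mem_univ, true_and] at hσ
      have ht : σ.symm r' ≠ r := fun h => hσ (h ▸ σ.apply_symm_apply r')
      simp only [Finset.mem_sigma, Finset.mem_filter, Finset.mem_univ, true_and,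
        Finset.mem_erase, Equiv.trans_apply, Equiv.swap_apply_left]
      exact ⟨σ.apply_symm_apply r', ht, trivial⟩
    · rintro ⟨π, t⟩ hx
      simp only [Finset.mem_sigma, Finset.mem_filter, Finset.mem_univ, true_and,
        Finset.mem_erase] at hx
      obtain ⟨hπr, htr, -⟩ := hx
      have hsymm : ((Equiv.swap r t).trans π).symm r' = t := by
        rw [Equiv.symm_apply_eq]
        simp [Equiv.trans_apply, Equiv.swap_apply_left, hπr]
      simp only [hsymm]
      congr 1
      ext s
      simp [Equiv.trans_apply, Equiv.swap_apply_self]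
    · intro σ hσ
      dsimp only
      ext s
      simp [Equiv.trans_apply, Equiv.swap_apply_self]
    · rintro ⟨π, t⟩ hx
      simp only [Finset.mem_sigma, Finset.mem_filter, Finset.mem_univ, true_and,
        Finset.mem_erase] at hx
      obtain ⟨hπr, htr, -⟩ := hx
      have htmem : t ∈ Finset.univ.erase r := Finset.mem_erase.mpr ⟨htr, Finset.mem_univ _⟩
      have hr1 := Finset.mul_prod_erase Finset.univ
        (fun s => A s (((Equiv.swap r t).trans π) s)) (Finset.mem_univ r)
      have hr2 := Finset.mul_prod_erase (Finset.univ.erase r)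
        (fun s => A s (((Equiv.swap r t).trans π) s)) htmem
      have hl2 := Finset.mul_prod_erase (Finset.univ.erase r)
        (fun s => A s (π s)) htmem
      have hrest : ∏ s ∈ (Finset.univ.erase r).erase t,
          A s (((Equiv.swap r t).trans π) s)
          = ∏ s ∈ (Finset.univ.erase r).erase t, A s (π s) := by
        refine Finset.prod_congr rfl fun s hs => ?_
        have hst := (Finset.mem_erase.mp hs).1
        have hsr := (Finset.mem_erase.mp (Finset.mem_erase.mp hs).2).1
        rw [Equiv.trans_apply, Equiv.swap_apply_of_ne_of_ne hsr hst]
      have hvr : ((Equiv.swap r t).trans π) r = π t := by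
        simp [Equiv.trans_apply, Equiv.swap_apply_left]
      have hvt : ((Equiv.swap r t).trans π) t = r' := by
        simp [Equiv.trans_apply, Equiv.swap_apply_right, hπr]
      have h0 : A t (π t) ≠ 0 := (hA t (π t)).ne'
      rw [← hr1, ← hr2, hrest, ← hl2]
      simp only [hvr, hvt]
      field_simp
  rw [one_div_div, hden, hT,
    ← Finset.sum_filter_add_sum_filter_not Finset.univ (fun π : R ≃ R' => π r = r')
      (fun π => ∏ s, A s (π s)), add_div, div_self hNpos.ne']
end

section
/- Let A be a strictly positive transition matrix on V × V', let n ≥ 2, r ∈ R, r' ∈ R'. For a private table τ with τ(r) arbitrary and τ(s) = v for all s ≠ r, and released table τ' with τ'(r') arbitrary and τ'(s') = v' for all s' ≠ r', the quantity (1/A_{τ(r),τ'(r')}) Σ_{t ≠ r} (A_{τ(t),τ'(r')} A_{τ(r),τ'(π(t))} / A_{τ(t),τ'(π(t))}) equals (n−1) · (A_{v,τ'(r')} A_{τ(r),v'}) / (A_{τ(r),τ'(r')} A_{v,v'}) for any bijection π with π(r) = r', and this is minimized over all tables by choosing values achieving min_{u,v,u',v'} (A_{u,v'} A_{v,u'})/(A_{u,u'}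 A_{v,v'}). -/
/-- worst-case table pair for PRAM re-identification. For a private
table constant equal to `v` off `r` and a released table constant equal to `v'` off
`r'`, and any bijection `π` with `π r = r'`,
`(1/A(τ r, τ' r')) Σ_{t≠r} A(τ t, τ' r') A(τ r, τ'(π t)) / A(τ t, τ'(π t))
 = (n-1) · A(v, τ' r') A(τ r, v') / (A(τ r, τ' r') A(v, v'))`, and this quantity is
bounded below by `(n-1)` times the minimum cross-ratio of `A`. -/
theorem stmt14 {R R' V V' : Type*} [Fintype R] [Fintype R'] [DecidableEq R]
    [DecidableEq R'] [Fintype V] [Fintype V'] [Nonempty V] [Nonempty V']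
    (hcard : Fintype.card R = Fintype.card R') (h2 : 2 ≤ Fintype.card R)
    (A : V → V' → ℝ) (hA : ∀ u v', 0 < A u v')
    (r : R) (r' : R') (v : V) (v' : V')
    (τ : R → V) (hτ : ∀ s, s ≠ r → τ s = v)
    (τ' : R' → V') (hτ' : ∀ s', s' ≠ r' → τ' s' = v')
    (π : R ≃ R') (hπ : π r = r') :
    (1 / A (τ r) (τ' r')) *
        (∑ t ∈ Finset.univ.erase r,
          A (τ t) (τ' r') * A (τ r) (τ' (π t)) / A (τ t) (τ' (π t)))
      = ((Fintype.card R : ℝ) - 1) *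
          (A v (τ' r') * A (τ r) v') / (A (τ r) (τ' r') * A v v') ∧
    ((Fintype.card R : ℝ) - 1) *
        (⨅ u₁ : V, ⨅ u₂ : V, ⨅ w₁ : V', ⨅ w₂ : V',
          (A u₁ w₂ * A u₂ w₁) / (A u₁ w₁ * A u₂ w₂))
      ≤ (1 / A (τ r) (τ' r')) *
          (∑ t ∈ Finset.univ.erase r,
            A (τ t) (τ' r') * A (τ r) (τ' (π t)) / A (τ t) (τ' (π t))) := by

  have hsum : (∑ t ∈ Finset.univ.erase r,
      A (τ t) (τ' r') * A (τ r) (τ' (π t)) / A (τ t) (τ' (π t)))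
      = ((Fintype.card R : ℝ) - 1) * (A v (τ' r') * A (τ r) v' / A v v') := by
    have : ∀ t ∈ Finset.univ.erase r,
        A (τ t) (τ' r') * A (τ r) (τ' (π t)) / A (τ t) (τ' (π t))
        = A v (τ' r') * A (τ r) v' / A v v' := by
      intro t ht
      have htr : t ≠ r := Finset.ne_of_mem_erase ht
      have h1 : τ t = v := hτ t htr
      have h2' : τ' (π t) = v' := hτ' (π t) (by
        intro h; exact htr (π.injective (h.trans hπ.symm)))
      rw [h1, h2']
    rw [Finset.sum_congr rfl this, Finset.sum_const,
      Finset.card_erase_of_mem (Finset.mem_univ r), Finset.card_univ,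
      nsmul_eq_mul, Nat.cast_sub (by omega), Nat.cast_one]
  have ha := hA (τ r) (τ' r')
  have hb := hA v v'
  have heq : (1 / A (τ r) (τ' r')) *
      (∑ t ∈ Finset.univ.erase r,
        A (τ t) (τ' r') * A (τ r) (τ' (π t)) / A (τ t) (τ' (π t)))
      = ((Fintype.card R : ℝ) - 1) *
          (A v (τ' r') * A (τ r) v') / (A (τ r) (τ' r') * A v v') := by
    rw [hsum]; field_simp
  refine ⟨heq, ?_⟩
  rw [heq]
  set f : V → V → V' → V' → ℝ := fun u₁ u₂ w₁ w₂ =>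
    (A u₁ w₂ * A u₂ w₁) / (A u₁ w₁ * A u₂ w₂) with hf
  have hfpos : ∀ u₁ u₂ w₁ w₂, 0 ≤ f u₁ u₂ w₁ w₂ := fun u₁ u₂ w₁ w₂ =>
    le_of_lt (div_pos (mul_pos (hA _ _) (hA _ _)) (mul_pos (hA _ _) (hA _ _)))
  have key : (⨅ u₁ : V, ⨅ u₂ : V, ⨅ w₁ : V', ⨅ w₂ : V', f u₁ u₂ w₁ w₂)
      ≤ f (τ r) v (τ' r') v' := by
    have b4 : ∀ u₁ u₂ w₁, (⨅ w₂ : V', f u₁ u₂ w₁ w₂) ≤ f u₁ u₂ w₁ v' := fun u₁ u₂ w₁ =>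
      ciInf_le ⟨0, by rintro x ⟨w₂, rfl⟩; exact hfpos _ _ _ _⟩ v'
    have n4 : ∀ u₁ u₂ w₁, 0 ≤ ⨅ w₂ : V', f u₁ u₂ w₁ w₂ := fun u₁ u₂ w₁ =>
      Real.iInf_nonneg (hfpos u₁ u₂ w₁)
    have b3 : ∀ u₁ u₂, (⨅ w₁ : V', ⨅ w₂ : V', f u₁ u₂ w₁ w₂)
        ≤ ⨅ w₂ : V', f u₁ u₂ (τ' r') w₂ := fun u₁ u₂ =>
      ciInf_le ⟨0, by rintro x ⟨w₁, rfl⟩; exact n4 _ _ _⟩ (τ' r')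
    have n3 : ∀ u₁ u₂, 0 ≤ ⨅ w₁ : V', ⨅ w₂ : V', f u₁ u₂ w₁ w₂ := fun u₁ u₂ =>
      Real.iInf_nonneg (n4 u₁ u₂)
    have b2 : ∀ u₁, (⨅ u₂ : V, ⨅ w₁ : V', ⨅ w₂ : V', f u₁ u₂ w₁ w₂)
        ≤ ⨅ w₁ : V', ⨅ w₂ : V', f u₁ v w₁ w₂ := fun u₁ =>
      ciInf_le ⟨0, by rintro x ⟨u₂, rfl⟩; exact n3 _ _⟩ v
    have n2 : ∀ u₁, 0 ≤ ⨅ u₂ : V, ⨅ w₁ : V', ⨅ w₂ : V', f u₁ u₂ w₁ w₂ := fun u₁ =>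
      Real.iInf_nonneg (n3 u₁)
    have b1 : (⨅ u₁ : V, ⨅ u₂ : V, ⨅ w₁ : V', ⨅ w₂ : V', f u₁ u₂ w₁ w₂)
        ≤ ⨅ u₂ : V, ⨅ w₁ : V', ⨅ w₂ : V', f (τ r) u₂ w₁ w₂ :=
      ciInf_le ⟨0, by rintro x ⟨u₁, rfl⟩; exact n2 _⟩ (τ r)
    exact b1.trans ((b2 (τ r)).trans ((b3 (τ r) v).trans (b4 (τ r) v (τ' r'))))
  have hn : (0:ℝ) ≤ (Fintype.card R : ℝ) - 1 := by
    have : (2:ℝ) ≤ (Fintype.card R : ℝ) := by exact_mod_cast h2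
    linarith
  have := mul_le_mul_of_nonneg_left key hn
  calc ((Fintype.card R : ℝ) - 1) *
        (⨅ u₁ : V, ⨅ u₂ : V, ⨅ w₁ : V', ⨅ w₂ : V', f u₁ u₂ w₁ w₂)
      ≤ ((Fintype.card R : ℝ) - 1) * f (τ r) v (τ' r') v' := this
    _ = ((Fintype.card R : ℝ) - 1) *
          (A v (τ' r') * A (τ r) v') / (A (τ r) (τ' r') * A v v') := by
        rw [hf]; ring
end

section
/- For a multi-attribute PRAM mechanism with independent per-attribute transition matrices A_a (each strictly positive, row-stochastic) on an n-record table, the mechanism is a Pk-anonymization with k = 1 + (n − 1) ∏_{a ∈ 𝒜} AR_a, where AR_a = min_{u,v ∈ V_a, u',v' ∈ V'_a} ((A_a)_{u,v'} (A_a)_{v,u'}) / ((A_a)_{u,u'} (A_a)_{v,v'}). -/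
/-- a multi-attribute PRAM mechanism with independent strictly positive
row-stochastic per-attribute matrices `A a` on an `n`-record table is a
Pk-anonymization with `k = 1 + (n-1) ∏_a AR_a`, where
`AR_a = min_{u,v,u',v'} ((A a) u v' · (A a) v u') / ((A a) u u' · (A a) v v')`. -/
theorem stmt15 {R : Type*} [Fintype R] [DecidableEq R] [Nonempty R]
    {𝒜 : Type*} [Fintype 𝒜] [DecidableEq 𝒜]
    (V V' : 𝒜 → Type*) [∀ a, Fintype (V a)] [∀ a, DecidableEq (V a)]
    [∀ a, Fintype (V' a)] [∀ a, Nonempty (V a)] [∀ a, Nonempty (V' a)]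
    (A : ∀ a, V a → V' a → ℝ) (hA : ∀ a u v', 0 < A a u v')
    (hrow : ∀ a u, ∑ v', A a u v' = 1)
    (fT : (R → ∀ a, V a) → ℝ) (hfT : ∀ τ, 0 ≤ fT τ) (hfT1 : ∑ τ, fT τ = 1)
    (τ' : R → ∀ a, V' a) (r r' : R) :
    (1 + ((Fintype.card R : ℝ) - 1) *
        ∏ a, ⨅ u : V a, ⨅ v : V a, ⨅ u' : V' a, ⨅ v' : V' a,
          (A a u v' * A a v u') / (A a u u' * A a v v')) *
      (∑ τ : R → ∀ a, V a, fT τ *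
        ∑ π ∈ Finset.univ.filter (fun π : Equiv.Perm R => π r = r'),
          ∏ s, ∏ a, A a (τ s a) (τ' (π s) a))
    ≤ ∑ τ : R → ∀ a, V a, fT τ *
        ∑ π : Equiv.Perm R, ∏ s, ∏ a, A a (τ s a) (τ' (π s) a) := by
  classical
  set c : 𝒜 → ℝ := fun a => ⨅ u : V a, ⨅ v : V a, ⨅ u' : V' a, ⨅ v' : V' a,
      (A a u v' * A a v u') / (A a u u' * A a v v') with hc
  have hc0 : ∀ a, 0 ≤ c a := by
    intro a
    refine Real.iInf_nonneg fun u => Real.iInf_nonneg fun v =>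
      Real.iInf_nonneg fun u' => Real.iInf_nonneg fun v' => ?_
    have h1 := hA a u v'
    have h2 := hA a v u'
    have h3 := hA a u u'
    have h4 := hA a v v'
    positivity
  have hcle : ∀ a (u v : V a) (u' v' : V' a),
      c a ≤ (A a u v' * A a v u') / (A a u u' * A a v v') := by
    intro a u v u' v'
    calc c a ≤ ⨅ v : V a, ⨅ u' : V' a, ⨅ v' : V' a,
          (A a u v' * A a v u') / (A a u u' * A a v v') :=
        ciInf_le (Finite.bddBelow_range _) u
      _ ≤ ⨅ u' : V' a, ⨅ v' : V' a,
          (A a u v' * A a v u') / (A a u u' * A a v v') :=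
        ciInf_le (Finite.bddBelow_range _) v
      _ ≤ ⨅ v' : V' a, (A a u v' * A a v u') / (A a u u' * A a v v') :=
        ciInf_le (Finite.bddBelow_range _) u'
      _ ≤ (A a u v' * A a v u') / (A a u u' * A a v v') :=
        ciInf_le (Finite.bddBelow_range _) v'
  -- per-τ statement
  have main : ∀ τ : R → ∀ a, V a,
      (1 + ((Fintype.card R : ℝ) - 1) * ∏ a, c a) *
        (∑ π ∈ Finset.univ.filter (fun π : Equiv.Perm R => π r = r'),
          ∏ s, ∏ a, A a (τ s a) (τ' (π s) a))
      ≤ ∑ π : Equiv.Perm R, ∏ s, ∏ a, A a (τ s a) (τ' (π s) a) := by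
    intro τ
    set f : Equiv.Perm R → ℝ := fun π => ∏ s, ∏ a, A a (τ s a) (τ' (π s) a) with hf
    have hf0 : ∀ π, 0 ≤ f π := fun π =>
      Finset.prod_nonneg fun s _ => Finset.prod_nonneg fun a _ => (hA a _ _).le
    -- key pointwise bound
    have key : ∀ (π : Equiv.Perm R), π r = r' → ∀ r'' : R, r'' ≠ r' →
        (∏ a, c a) * f π ≤ f (Equiv.swap r' r'' * π) := by
      intro π hπ r'' hne
      set σ := Equiv.swap r' r'' with hσ
      set s₂ := π.symm r'' with hs₂
      have hπs₂ : π s₂ = r'' := π.apply_symm_apply r''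
      have hrs : r ≠ s₂ := by
        intro h; apply hne; rw [← hπ, h, hπs₂]
      have hswap : ∀ s : R, s ≠ r → s ≠ s₂ → σ (π s) = π s := by
        intro s h1 h2
        apply Equiv.swap_apply_of_ne_of_ne
        · intro h; exact h1 (π.injective (by rw [h, hπ]))
        · intro h; exact h2 (π.injective (by rw [h, hπs₂]))
      have hfπ : f π = ∏ a, ∏ s, A a (τ s a) (τ' (π s) a) := Finset.prod_comm
      have hfσπ : f (σ * π) = ∏ a, ∏ s, A a (τ s a) (τ' (σ (π s)) a) := Finset.prod_comm
      rw [hfπ, hfσπ, ← Finset.prod_mul_distrib]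
      apply Finset.prod_le_prod
      · intro a _
        exact mul_nonneg (hc0 a) (Finset.prod_nonneg fun s _ => (hA a _ _).le)
      · intro a _
        -- split off s = r and s = s₂
        have hmem₂ : s₂ ∈ (Finset.univ : Finset R).erase r :=
          Finset.mem_erase.2 ⟨fun h => hrs h.symm, Finset.mem_univ _⟩
        have hsplit : ∀ g : R → ℝ,
            ∏ s, g s = g r * (g s₂ * ∏ s ∈ (Finset.univ.erase r).erase s₂, g s) := by
          intro g
          rw [Finset.mul_prod_erase _ g hmem₂, Finset.mul_prod_erase _ g (Finset.mem_univ r)]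
        rw [hsplit (fun s => A a (τ s a) (τ' (π s) a)),
            hsplit (fun s => A a (τ s a) (τ' (σ (π s)) a))]
        have htail : ∏ s ∈ (Finset.univ.erase r).erase s₂, A a (τ s a) (τ' (σ (π s)) a)
            = ∏ s ∈ (Finset.univ.erase r).erase s₂, A a (τ s a) (τ' (π s) a) := by
          apply Finset.prod_congr rfl
          intro s hs
          rw [hswap s (Finset.mem_erase.1 (Finset.mem_erase.1 hs).2).1
              (Finset.mem_erase.1 hs).1]
        rw [htail]
        have hσr' : σ r' = r'' := Equiv.swap_apply_left r' r''
        have hσr'' : σ r'' = r' := Equiv.swap_apply_right r' r''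
        rw [hπ, hπs₂, hσr', hσr'']
        set u := τ r a
        set v := τ s₂ a
        set u' := τ' r' a
        set v' := τ' r'' a
        have hD : 0 < A a u u' * A a v v' := mul_pos (hA a u u') (hA a v v')
        have hmain : c a * (A a u u' * A a v v') ≤ A a u v' * A a v u' :=
          (le_div_iff₀ hD).1 (hcle a u v u' v')
        have htail0 : 0 ≤ ∏ s ∈ (Finset.univ.erase r).erase s₂,
            A a (τ s a) (τ' (π s) a) :=
          Finset.prod_nonneg fun s _ => (hA a _ _).le
        calc c a * (A a u u' * (A a v v' *
              ∏ s ∈ (Finset.univ.erase r).erase s₂, A a (τ s a) (τ' (π s) a)))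
            = (c a * (A a u u' * A a v v')) *
              ∏ s ∈ (Finset.univ.erase r).erase s₂, A a (τ s a) (τ' (π s) a) := by ring
          _ ≤ (A a u v' * A a v u') *
              ∏ s ∈ (Finset.univ.erase r).erase s₂, A a (τ s a) (τ' (π s) a) :=
            mul_le_mul_of_nonneg_right hmain htail0
          _ = A a u v' * (A a v u' *
              ∏ s ∈ (Finset.univ.erase r).erase s₂, A a (τ s a) (τ' (π s) a)) := by ring
    -- fiberwise decomposition
    have hfib : ∑ π : Equiv.Perm R, f π
        = ∑ r'' : R, ∑ π ∈ Finset.univ.filter (fun π : Equiv.Perm R => π r = r''), f π :=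
      (Finset.sum_fiberwise_of_maps_to (fun π _ => Finset.mem_univ (π r)) f).symm
    set S : R → ℝ := fun r'' =>
      ∑ π ∈ Finset.univ.filter (fun π : Equiv.Perm R => π r = r''), f π with hS
    have hSfiber : ∀ r'' : R, r'' ≠ r' → (∏ a, c a) * S r' ≤ S r'' := by
      intro r'' hne
      have hinj : ∀ π₁ ∈ Finset.univ.filter (fun π : Equiv.Perm R => π r = r'),
          ∀ π₂ ∈ Finset.univ.filter (fun π : Equiv.Perm R => π r = r'),
          Equiv.swap r' r'' * π₁ = Equiv.swap r' r'' * π₂ → π₁ = π₂ := by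
        intro π₁ _ π₂ _ h
        exact mul_left_cancel h
      have hmaps : ∀ π ∈ Finset.univ.filter (fun π : Equiv.Perm R => π r = r'),
          Equiv.swap r' r'' * π ∈
            Finset.univ.filter (fun π : Equiv.Perm R => π r = r'') := by
        intro π hπ
        simp only [Finset.mem_filter, Finset.mem_univ, true_and] at hπ ⊢
        simp [Equiv.Perm.mul_apply, hπ, Equiv.swap_apply_left]
      calc (∏ a, c a) * S r'
          = ∑ π ∈ Finset.univ.filter (fun π : Equiv.Perm R => π r = r'),
              (∏ a, c a) * f π := by rw [hS]; exact Finset.mul_sum _ _ _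
        _ ≤ ∑ π ∈ Finset.univ.filter (fun π : Equiv.Perm R => π r = r'),
              f (Equiv.swap r' r'' * π) := by
            apply Finset.sum_le_sum
            intro π hπ
            simp only [Finset.mem_filter, Finset.mem_univ, true_and] at hπ
            exact key π hπ r'' hne
        _ = ∑ π ∈ (Finset.univ.filter (fun π : Equiv.Perm R => π r = r')).image
              (fun π => Equiv.swap r' r'' * π), f π := by
            rw [Finset.sum_image hinj]
        _ ≤ S r'' := by
            apply Finset.sum_le_sum_of_subset_of_nonneg
            · intro π hπ
              obtain ⟨π₀, hπ₀, rfl⟩ := Finset.mem_image.1 hπ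
              exact hmaps π₀ hπ₀
            · intro π _ _; exact hf0 π
    have hcard : ((Finset.univ.erase r').card : ℝ) = (Fintype.card R : ℝ) - 1 := by
      rw [Finset.card_erase_of_mem (Finset.mem_univ r'), Finset.card_univ]
      have h1 : 1 ≤ Fintype.card R := Fintype.card_pos
      push_cast [Nat.cast_sub h1]
      ring
    have hS0 : 0 ≤ S r' := Finset.sum_nonneg fun π _ => hf0 π
    calc (1 + ((Fintype.card R : ℝ) - 1) * ∏ a, c a) * S r'
        = S r' + ∑ _r'' ∈ Finset.univ.erase r', (∏ a, c a) * S r' := by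
          rw [Finset.sum_const, nsmul_eq_mul, hcard]; ring
      _ ≤ S r' + ∑ r'' ∈ Finset.univ.erase r', S r'' := by
          apply add_le_add (le_refl _)
          apply Finset.sum_le_sum
          intro r'' hr''
          exact hSfiber r'' (Finset.mem_erase.1 hr'').1
      _ = ∑ r'' : R, S r'' := Finset.add_sum_erase _ S (Finset.mem_univ r')
      _ = ∑ π : Equiv.Perm R, f π := hfib.symm
  -- assemble over τ with weights fT
  rw [Finset.mul_sum]
  apply Finset.sum_le_sum
  intro τ _
  calc (1 + ((Fintype.card R : ℝ) - 1) * ∏ a, c a) *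
        (fT τ * ∑ π ∈ Finset.univ.filter (fun π : Equiv.Perm R => π r = r'),
          ∏ s, ∏ a, A a (τ s a) (τ' (π s) a))
      = fT τ * ((1 + ((Fintype.card R : ℝ) - 1) * ∏ a, c a) *
        ∑ π ∈ Finset.univ.filter (fun π : Equiv.Perm R => π r = r'),
          ∏ s, ∏ a, A a (τ s a) (τ' (π s) a)) := by ring
    _ ≤ fT τ * ∑ π : Equiv.Perm R, ∏ s, ∏ a, A a (τ s a) (τ' (π s) a) :=
      mul_le_mul_of_nonneg_left (main τ) (hfT τ)
end

section
/- Retention-replacement perturbation with per-attribute retention probabilities ρ_a on an n-record table is a Pk-anonymization with k = 1 + (n − 1) ∏_{a ∈ 𝒜} ((1 − ρ_a)/(1 + (|V_a| − 1)ρ_a))². -/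
/-- retention-replacement perturbation with per-attribute retention
probabilities `ρ a` on an `n`-record table is a Pk-anonymization with
`k = 1 + (n-1) ∏_a ((1 - ρ_a)/(1 + (|V_a| - 1) ρ_a))²`. -/
theorem stmt16 {R : Type*} [Fintype R] [DecidableEq R] [Nonempty R]
    {𝒜 : Type*} [Fintype 𝒜] [DecidableEq 𝒜]
    (V : 𝒜 → Type*) [∀ a, Fintype (V a)] [∀ a, DecidableEq (V a)]
    (hm : ∀ a, 2 ≤ Fintype.card (V a))
    (ρ : 𝒜 → ℝ) (hρ0 : ∀ a, 0 ≤ ρ a) (hρ1 : ∀ a, ρ a < 1)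
    (A : ∀ a, V a → V a → ℝ)
    (hA : ∀ a u v, A a u v =
      if u = v then ρ a + (1 - ρ a) / (Fintype.card (V a) : ℝ)
      else (1 - ρ a) / (Fintype.card (V a) : ℝ))
    (fT : (R → ∀ a, V a) → ℝ) (hfT : ∀ τ, 0 ≤ fT τ) (hfT1 : ∑ τ, fT τ = 1)
    (τ' : R → ∀ a, V a) (r r' : R) :
    (1 + ((Fintype.card R : ℝ) - 1) *
        ∏ a, ((1 - ρ a) / (1 + ((Fintype.card (V a) : ℝ) - 1) * ρ a)) ^ 2) *
      (∑ τ : R → ∀ a, V a, fT τ *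
        ∑ π ∈ Finset.univ.filter (fun π : Equiv.Perm R => π r = r'),
          ∏ s, ∏ a, A a (τ s a) (τ' (π s) a))
    ≤ ∑ τ : R → ∀ a, V a, fT τ *
        ∑ π : Equiv.Perm R, ∏ s, ∏ a, A a (τ s a) (τ' (π s) a) := by
  classical
  set ratio : 𝒜 → ℝ := fun a => (1 - ρ a) / (1 + ((Fintype.card (V a) : ℝ) - 1) * ρ a)
    with hratio_def
  have hmR : ∀ a, (2 : ℝ) ≤ (Fintype.card (V a) : ℝ) := fun a => by
    exact_mod_cast hm a
  have hden : ∀ a, (0 : ℝ) < 1 + ((Fintype.card (V a) : ℝ) - 1) * ρ a := fun a => by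
    nlinarith [hρ0 a, hmR a]
  have hratio_pos : ∀ a, 0 < ratio a := fun a =>
    div_pos (by linarith [hρ1 a]) (hden a)
  have hcardpos : ∀ a, (0 : ℝ) < (Fintype.card (V a) : ℝ) := fun a => by
    linarith [hmR a]
  -- bounds on A
  have hAmin : ∀ a (u v : V a), (1 - ρ a) / (Fintype.card (V a) : ℝ) ≤ A a u v := by
    intro a u v
    rw [hA]
    split
    · linarith [hρ0 a]
    · exact le_rfl
  have hAmax : ∀ a (u v : V a), A a u v ≤ ρ a + (1 - ρ a) / (Fintype.card (V a) : ℝ) := by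
    intro a u v
    rw [hA]
    split
    · exact le_rfl
    · linarith [hρ0 a]
  have hApos : ∀ a (u v : V a), 0 < A a u v := fun a u v =>
    lt_of_lt_of_le (div_pos (by linarith [hρ1 a]) (hcardpos a)) (hAmin a u v)
  -- the key per-attribute inequality
  have hkey : ∀ a (u v u' v' : V a), ratio a * A a u' v' ≤ A a u v := by
    intro a u v u' v'
    have h1 : ratio a * A a u' v' ≤ ratio a * (ρ a + (1 - ρ a) / (Fintype.card (V a) : ℝ)) :=
      mul_le_mul_of_nonneg_left (hAmax a u' v') (hratio_pos a).le
    have h2 : ratio a * (ρ a + (1 - ρ a) / (Fintype.card (V a) : ℝ))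
        = (1 - ρ a) / (Fintype.card (V a) : ℝ) := by
      have hd : (1 + ((Fintype.card (V a) : ℝ) - 1) * ρ a) ≠ 0 := (hden a).ne'
      have hcn : ((Fintype.card (V a)) : ℝ) ≠ 0 := (hcardpos a).ne'
      rw [hratio_def]
      show (1 - ρ a) / (1 + ((Fintype.card (V a) : ℝ) - 1) * ρ a) * _ = _
      rw [div_mul_eq_mul_div, div_eq_div_iff hd hcn, mul_assoc, add_mul, div_mul_cancel₀ _ hcn]
      ring
    calc ratio a * A a u' v' ≤ _ := h1
      _ = (1 - ρ a) / (Fintype.card (V a) : ℝ) := h2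
      _ ≤ A a u v := hAmin a u v
  set c : ℝ := ∏ a, ratio a with hc_def
  have hc_pos : 0 < c := Finset.prod_pos (fun a _ => hratio_pos a)
  have hprod : (∏ a, ((1 - ρ a) / (1 + ((Fintype.card (V a) : ℝ) - 1) * ρ a)) ^ 2) = c * c := by
    rw [hc_def, ← Finset.prod_mul_distrib]
    apply Finset.prod_congr rfl
    intro a _
    ring
  -- the per-table inequality
  have main : ∀ τ : R → ∀ a, V a,
      (1 + ((Fintype.card R : ℝ) - 1) * (c * c)) *
        (∑ π ∈ Finset.univ.filter (fun π : Equiv.Perm R => π r = r'),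
          ∏ s, ∏ a, A a (τ s a) (τ' (π s) a))
      ≤ ∑ π : Equiv.Perm R, ∏ s, ∏ a, A a (τ s a) (τ' (π s) a) := by
    intro τ
    set p : R → R → ℝ := fun s t => ∏ a, A a (τ s a) (τ' t a) with hp_def
    have hp_pos : ∀ s t, 0 < p s t := fun s t =>
      Finset.prod_pos (fun a _ => hApos a _ _)
    have hp_key : ∀ s t t', c * p s t' ≤ p s t := by
      intro s t t'
      rw [hc_def, hp_def]
      simp only
      rw [← Finset.prod_mul_distrib]
      exact Finset.prod_le_prod
        (fun a _ => mul_nonneg (hratio_pos a).le (hApos a _ _).le)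
        (fun a _ => hkey a _ _ _ _)
    set P : Equiv.Perm R → ℝ := fun π => ∏ s, p s (π s) with hP_def
    have hP_pos : ∀ π, 0 < P π := fun π => Finset.prod_pos (fun s _ => hp_pos s _)
    set S : R → ℝ := fun r'' => ∑ π ∈ Finset.univ.filter (fun π : Equiv.Perm R => π r = r''), P π
      with hS_def
    have hS_nonneg : ∀ r'', 0 ≤ S r'' :=
      fun r'' => Finset.sum_nonneg (fun π _ => (hP_pos π).le)
    -- For each r'' ≠ r', S r'' ≥ c² S r'
    have hstep : ∀ r'' : R, r'' ≠ r' → c * c * S r' ≤ S r'' := by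
      intro r'' hne
      have hswap : ∀ π : Equiv.Perm R, π r = r' →
          c * c * P π ≤ P (Equiv.swap r' r'' * π) := by
        intro π hπ
        have hptwise : ∀ s : R,
            (if π s = r' then c else 1) * (if π s = r'' then c else 1) * p s (π s)
              ≤ p s ((Equiv.swap r' r'') (π s)) := by
          intro s
          by_cases h1 : π s = r'
          · simp only [h1, if_pos rfl, Equiv.swap_apply_left]
            rw [if_neg hne.symm]
            rw [mul_one]
            exact hp_key s r'' r'
          · by_cases h2 : π s = r''
            · simp only [h2, if_neg h1, if_pos rfl, Equiv.swap_apply_right]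
              rw [if_neg (fun h : (r'' : R) = r' => hne h)]
              rw [one_mul]
              exact hp_key s r' r''
            · rw [if_neg h1, if_neg h2, Equiv.swap_apply_of_ne_of_ne h1 h2]
              simp
        have hprod1 : (∏ s, (if π s = r' then c else 1)) = c := by
          rw [Equiv.prod_comp π (fun t => if t = r' then c else 1)]
          simp [Finset.prod_ite_eq']
        have hprod2 : (∏ s, (if π s = r'' then c else 1)) = c := by
          rw [Equiv.prod_comp π (fun t => if t = r'' then c else 1)]
          simp [Finset.prod_ite_eq']
        calc c * c * P π
            = ∏ s, ((if π s = r' then c else 1) * (if π s = r'' then c else 1) * p s (π s)) := by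
              rw [Finset.prod_mul_distrib, Finset.prod_mul_distrib, hprod1, hprod2, hP_def]
          _ ≤ ∏ s, p s ((Equiv.swap r' r'') (π s)) :=
              Finset.prod_le_prod
                (fun s _ => by
                  have := hp_pos s (π s)
                  positivity)
                (fun s _ => hptwise s)
          _ = P (Equiv.swap r' r'' * π) := by
              rw [hP_def]
              rfl
      -- sum over the fiber
      have hbij : (∑ π ∈ Finset.univ.filter (fun π : Equiv.Perm R => π r = r'),
          P (Equiv.swap r' r'' * π)) = S r'' := by
        rw [hS_def]
        refine Finset.sum_nbij' (fun π => Equiv.swap r' r'' * π) (fun π => Equiv.swap r' r'' * π)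
          ?_ ?_ ?_ ?_ ?_
        · intro π hπ
          simp only [Finset.mem_filter, Finset.mem_univ, true_and] at hπ ⊢
          show Equiv.swap r' r'' (π r) = r''
          rw [hπ]
          exact Equiv.swap_apply_left r' r''
        · intro π hπ
          simp only [Finset.mem_filter, Finset.mem_univ, true_and] at hπ ⊢
          show Equiv.swap r' r'' (π r) = r'
          rw [hπ]
          exact Equiv.swap_apply_right r' r''
        · intro π _
          show Equiv.swap r' r'' * (Equiv.swap r' r'' * π) = π
          rw [← mul_assoc, Equiv.swap_mul_self, one_mul]
        · intro π _
          show Equiv.swap r' r'' * (Equiv.swap r' r'' * π) = π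
          rw [← mul_assoc, Equiv.swap_mul_self, one_mul]
        · intro π _
          rfl
      rw [← hbij, hS_def]
      simp only
      rw [Finset.mul_sum]
      exact Finset.sum_le_sum (fun π hπ => by
        simp only [Finset.mem_filter, Finset.mem_univ, true_and] at hπ
        exact hswap π hπ)
    -- total sum as sum of fibers
    have htotal : (∑ π : Equiv.Perm R, P π) = ∑ r'' : R, S r'' := by
      rw [hS_def]
      exact (Finset.sum_fiberwise Finset.univ (fun π : Equiv.Perm R => π r) P).symm
    have hsplit : (∑ r'' : R, S r'') = S r' + ∑ r'' ∈ Finset.univ.erase r', S r'' :=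
      (Finset.add_sum_erase Finset.univ S (Finset.mem_univ r')).symm
    have hcard : ((Finset.univ.erase r').card : ℝ) = (Fintype.card R : ℝ) - 1 := by
      rw [Finset.card_erase_of_mem (Finset.mem_univ r'), Finset.card_univ]
      have h1 : 1 ≤ Fintype.card R := Fintype.card_pos
      push_cast [Nat.cast_sub h1]
      ring
    have hlower : ((Fintype.card R : ℝ) - 1) * (c * c * S r')
        ≤ ∑ r'' ∈ Finset.univ.erase r', S r'' := by
      calc ((Fintype.card R : ℝ) - 1) * (c * c * S r')
          = ∑ _r'' ∈ Finset.univ.erase r', c * c * S r' := by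
            rw [Finset.sum_const, nsmul_eq_mul, hcard]
        _ ≤ ∑ r'' ∈ Finset.univ.erase r', S r'' :=
            Finset.sum_le_sum (fun r'' hr'' =>
              hstep r'' (Finset.ne_of_mem_erase hr''))
    have : (1 + ((Fintype.card R : ℝ) - 1) * (c * c)) * S r'
        ≤ S r' + ∑ r'' ∈ Finset.univ.erase r', S r'' := by
      nlinarith [hlower]
    calc (1 + ((Fintype.card R : ℝ) - 1) * (c * c)) *
        (∑ π ∈ Finset.univ.filter (fun π : Equiv.Perm R => π r = r'), P π)
        = (1 + ((Fintype.card R : ℝ) - 1) * (c * c)) * S r' := by rw [hS_def]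
      _ ≤ S r' + ∑ r'' ∈ Finset.univ.erase r', S r'' := this
      _ = ∑ r'' : R, S r'' := hsplit.symm
      _ = ∑ π : Equiv.Perm R, P π := htotal.symm
  -- assemble
  rw [hprod, Finset.mul_sum]
  apply Finset.sum_le_sum
  intro τ _
  rw [show (1 + ((Fintype.card R : ℝ) - 1) * (c * c)) *
      (fT τ * ∑ π ∈ Finset.univ.filter (fun π : Equiv.Perm R => π r = r'),
        ∏ s, ∏ a, A a (τ s a) (τ' (π s) a))
    = fT τ * ((1 + ((Fintype.card R : ℝ) - 1) * (c * c)) *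
      ∑ π ∈ Finset.univ.filter (fun π : Equiv.Perm R => π r = r'),
        ∏ s, ∏ a, A a (τ s a) (τ' (π s) a)) by ring]
  exact mul_le_mul_of_nonneg_left (main τ) (hfT τ)
end

section
/- Fix n ≥ 2 and finite attribute cardinalities m_a ≥ 2. The function ρ ↦ 1 + (n − 1) ∏_{a} ((1 − ρ)/(1 + (m_a − 1)ρ))² is continuous and strictly monotonically decreasing on [0, 1], taking value n at ρ = 0 and value 1 at ρ = 1; hence for every k ∈ [1, n] there exists a unique ρ ∈ [0, 1] achieving Pk-anonymity with equality. -/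
/-- the function `k(ρ) = 1 + (n-1) ∏_a ((1-ρ)/(1+(m_a-1)ρ))²` is
continuous and strictly decreasing on `[0,1]`, with `k(0) = n` and `k(1) = 1`; hence
every `k ∈ [1, n]` is achieved by a unique `ρ ∈ [0,1]`. -/
theorem stmt17 {𝒜 : Type*} [Fintype 𝒜] [Nonempty 𝒜]
    (m : 𝒜 → ℕ) (hm : ∀ a, 2 ≤ m a) (n : ℕ) (hn : 2 ≤ n) :
    let f : ℝ → ℝ := fun ρ => 1 + ((n : ℝ) - 1) *
      ∏ a, ((1 - ρ) / (1 + ((m a : ℝ) - 1) * ρ)) ^ 2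
    ContinuousOn f (Set.Icc 0 1) ∧ StrictAntiOn f (Set.Icc 0 1) ∧
    f 0 = (n : ℝ) ∧ f 1 = 1 ∧
    ∀ k ∈ Set.Icc (1 : ℝ) (n : ℝ), ∃! ρ, ρ ∈ Set.Icc (0 : ℝ) 1 ∧ f ρ = k := by
  intro f
  have hc : ∀ a, (1 : ℝ) ≤ (m a : ℝ) - 1 := by
    intro a
    have := hm a
    have : (2 : ℝ) ≤ (m a : ℝ) := by exact_mod_cast this
    linarith
  have hden : ∀ a, ∀ ρ : ℝ, 0 ≤ ρ → 0 < 1 + ((m a : ℝ) - 1) * ρ := by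
    intro a ρ hρ
    have := hc a
    nlinarith
  -- strict monotonicity of each base factor
  have hbase : ∀ a, ∀ x y : ℝ, 0 ≤ x → x < y → y ≤ 1 →
      (1 - y) / (1 + ((m a : ℝ) - 1) * y) < (1 - x) / (1 + ((m a : ℝ) - 1) * x) := by
    intro a x y hx hxy hy
    have hdx := hden a x hx
    have hdy := hden a y (le_trans hx hxy.le)
    rw [div_lt_div_iff₀ hdy hdx]
    have := hc a
    nlinarith
  have hnn : ∀ a, ∀ ρ : ℝ, 0 ≤ ρ → ρ ≤ 1 →
      0 ≤ (1 - ρ) / (1 + ((m a : ℝ) - 1) * ρ) := by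
    intro a ρ h0 h1
    exact div_nonneg (by linarith) (hden a ρ h0).le
  have hpos : ∀ a, ∀ ρ : ℝ, 0 ≤ ρ → ρ < 1 →
      0 < (1 - ρ) / (1 + ((m a : ℝ) - 1) * ρ) := by
    intro a ρ h0 h1
    exact div_pos (by linarith) (hden a ρ h0)
  have hcont : ContinuousOn f (Set.Icc 0 1) := by
    apply ContinuousOn.add continuousOn_const
    apply ContinuousOn.mul continuousOn_const
    apply continuousOn_finset_prod
    intro a _
    apply ContinuousOn.pow
    apply ContinuousOn.div
    · fun_prop
    · fun_prop
    · intro ρ hρ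
      exact (hden a ρ hρ.1).ne'
  have hanti : StrictAntiOn f (Set.Icc 0 1) := by
    intro x hx y hy hxy
    have hn1 : (0 : ℝ) < (n : ℝ) - 1 := by
      have : (2 : ℝ) ≤ (n : ℝ) := by exact_mod_cast hn
      linarith
    have hprod : (∏ a, ((1 - y) / (1 + ((m a : ℝ) - 1) * y)) ^ 2)
        < ∏ a, ((1 - x) / (1 + ((m a : ℝ) - 1) * x)) ^ 2 := by
      rcases eq_or_lt_of_le hy.2 with h1 | h1
      · -- y = 1 : product is 0, while product at x is positive
        have hy0 : ∀ a, ((1 - y) / (1 + ((m a : ℝ) - 1) * y)) ^ 2 = 0 := by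
          intro a; rw [← h1]; simp
        rw [Finset.prod_congr rfl (fun a _ => hy0 a), Finset.prod_const,
          zero_pow (Finset.card_ne_zero.mpr Finset.univ_nonempty)]
        apply Finset.prod_pos
        intro a _
        exact pow_pos (hpos a x hx.1 (h1 ▸ hxy)) 2
      · -- y < 1 : all factors strictly smaller
        apply Finset.prod_lt_prod_of_nonempty
        · intro a _
          exact pow_pos (hpos a y (le_trans hx.1 hxy.le) h1) 2
        · intro a _
          apply pow_lt_pow_left₀ (hbase a x y hx.1 hxy hy.2)
            (hnn a y (le_trans hx.1 hxy.le) hy.2) (by norm_num)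
        · exact Finset.univ_nonempty
    simp only [f]
    nlinarith
  have h0 : f 0 = (n : ℝ) := by
    simp only [f, mul_zero, add_zero, sub_zero, div_one, one_pow,
      Finset.prod_const_one, mul_one]
    ring
  have h1 : f 1 = 1 := by
    simp only [f, sub_self, zero_div, ne_eq, OfNat.ofNat_ne_zero,
      not_false_eq_true, zero_pow, Finset.prod_const,
      mul_zero, add_zero]
    rw [zero_pow (Finset.card_ne_zero.mpr Finset.univ_nonempty), mul_zero,
      add_zero]
  refine ⟨hcont, hanti, h0, h1, ?_⟩
  intro k hk
  have hsub := intermediate_value_Icc' (by norm_num : (0:ℝ) ≤ 1) hcont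
  have hk' : k ∈ Set.Icc (f 1) (f 0) := by rw [h0, h1]; exact hk
  obtain ⟨ρ, hρ, hfρ⟩ := hsub hk'
  refine ⟨ρ, ⟨hρ, hfρ⟩, ?_⟩
  rintro ρ' ⟨hρ', hfρ'⟩
  exact hanti.injOn hρ' hρ (by rw [hfρ, hfρ'])
end
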